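/- arXiv:1907.05066 — 8 statements merged into one kernel-verified Lean document; each statement's English description precedes it below -/
import Mathlib

section
/- For any t > 0 and μ ≠ 0, the function a ↦ 1 - (2/π) ∫₀^{√((t-a)/a)} e^{-(μ²/2)·a·(1+y²)}/(1+y²) dy, defined on (0,t], tends to 0 as a → 0⁺; i.e., lim_{a→0⁺} (2/π) ∫₀^{√((t-a)/a)} e^{-(μ²/2)·a·(1+y²)}/(1+y²) dy = 1. -/
open Real Filter

private lemma sqrt_tendsto_atTop' : Tendsto Real.sqrt atTop atTop := by
  rw [tendsto_atTop_atTop]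
  intro b
  refine ⟨(max b 0) ^ 2, fun x hx => le_trans (le_max_left b 0) ?_⟩
  calc max b 0 = Real.sqrt ((max b 0) ^ 2) := (Real.sqrt_sq (le_max_right b 0)).symm
    _ ≤ Real.sqrt x := Real.sqrt_le_sqrt hx

theorem stmt_0 (t μ : ℝ) (ht : 0 < t) (hμ : μ ≠ 0) :
    Tendsto (fun a : ℝ =>
        (2 / π) * ∫ y in (0:ℝ)..Real.sqrt ((t - a) / a),
          Real.exp (-(μ ^ 2 / 2) * a * (1 + y ^ 2)) / (1 + y ^ 2))
      (nhdsWithin 0 (Set.Ioi 0)) (nhds 1) := by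
  set X : ℝ → ℝ := fun a => Real.sqrt ((t - a) / a) with hXdef
  have hpos : ∀ y : ℝ, (0:ℝ) < 1 + y ^ 2 := fun y => by positivity
  have hcont : ∀ a : ℝ, Continuous
      (fun y : ℝ => Real.exp (-(μ ^ 2 / 2) * a * (1 + y ^ 2)) / (1 + y ^ 2)) := by
    intro a
    exact (Real.continuous_exp.comp (by continuity)).div (by continuity)
      (fun y => (hpos y).ne')
  have hcont1 : Continuous (fun y : ℝ => 1 / (1 + y ^ 2)) :=
    continuous_const.div (by continuity) (fun y => (hpos y).ne')
  set E : ℝ → ℝ := fun a => ∫ y in (0:ℝ)..X a,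
      (1 / (1 + y ^ 2) - Real.exp (-(μ ^ 2 / 2) * a * (1 + y ^ 2)) / (1 + y ^ 2)) with hEdef
  -- identity
  have hid : ∀ a : ℝ, (∫ y in (0:ℝ)..X a,
      Real.exp (-(μ ^ 2 / 2) * a * (1 + y ^ 2)) / (1 + y ^ 2))
      = Real.arctan (X a) - E a := by
    intro a
    have h1 : IntervalIntegrable (fun y : ℝ => 1 / (1 + y ^ 2)) MeasureTheory.volume 0 (X a) :=
      hcont1.intervalIntegrable 0 (X a)
    have h2 : IntervalIntegrable
        (fun y : ℝ => Real.exp (-(μ ^ 2 / 2) * a * (1 + y ^ 2)) / (1 + y ^ 2))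
        MeasureTheory.volume 0 (X a) := (hcont a).intervalIntegrable 0 (X a)
    simp only [hEdef]
    rw [intervalIntegral.integral_sub h1 h2, integral_one_div_one_add_sq, Real.arctan_zero]
    ring
  -- X tends to atTop
  have hXtop : Tendsto X (nhdsWithin 0 (Set.Ioi 0)) atTop := by
    apply sqrt_tendsto_atTop'.comp
    have h1 : Tendsto (fun a : ℝ => t * a⁻¹ - 1) (nhdsWithin 0 (Set.Ioi 0)) atTop :=
      tendsto_atTop_add_const_right _ (-1) (tendsto_inv_nhdsGT_zero.const_mul_atTop ht)
    refine h1.congr' ?_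
    filter_upwards [self_mem_nhdsWithin] with a (ha : 0 < a)
    field_simp
  have harctan : Tendsto (fun a => Real.arctan (X a)) (nhdsWithin 0 (Set.Ioi 0)) (nhds (π / 2)) :=
    (Real.tendsto_arctan_atTop.mono_right nhdsWithin_le_nhds).comp hXtop
  -- error tends to 0
  have hE0 : Tendsto E (nhdsWithin 0 (Set.Ioi 0)) (nhds 0) := by
    have hbound : ∀ᶠ a in nhdsWithin 0 (Set.Ioi 0), ‖E a‖ ≤ μ ^ 2 / 2 * Real.sqrt (a * t) := by
      filter_upwards [self_mem_nhdsWithin] with a (ha : 0 < a)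
      have hXnn : 0 ≤ X a := Real.sqrt_nonneg _
      have hstep : ‖E a‖ ≤ μ ^ 2 / 2 * a * |X a - 0| := by
        apply intervalIntegral.norm_integral_le_of_norm_le_const
        intro y _
        have hc : 0 ≤ μ ^ 2 / 2 * a := by positivity
        have hy := hpos y
        have hexp_le : Real.exp (-(μ ^ 2 / 2) * a * (1 + y ^ 2)) ≤ 1 := by
          apply Real.exp_le_one_iff.mpr
          nlinarith
        have hnn : 0 ≤ 1 / (1 + y ^ 2) - Real.exp (-(μ ^ 2 / 2) * a * (1 + y ^ 2)) / (1 + y ^ 2) := by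
          rw [sub_nonneg]
          gcongr
        have hle : 1 / (1 + y ^ 2) - Real.exp (-(μ ^ 2 / 2) * a * (1 + y ^ 2)) / (1 + y ^ 2)
            ≤ μ ^ 2 / 2 * a := by
          have h1 : 1 - μ ^ 2 / 2 * a * (1 + y ^ 2) ≤ Real.exp (-(μ ^ 2 / 2) * a * (1 + y ^ 2)) := by
            have := Real.add_one_le_exp (-(μ ^ 2 / 2) * a * (1 + y ^ 2))
            linarith
          rw [div_sub_div_same, div_le_iff₀ hy]
          nlinarith
        rw [Real.norm_eq_abs, abs_le]
        constructor
        · nlinarith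
        · exact hle
      have haX : a * X a ≤ Real.sqrt (a * t) := by
        have h1 : X a ≤ Real.sqrt (t / a) := by
          apply Real.sqrt_le_sqrt
          gcongr
          linarith
        calc a * X a ≤ a * Real.sqrt (t / a) := by nlinarith [Real.sqrt_nonneg (t/a)]
          _ = Real.sqrt (a ^ 2) * Real.sqrt (t / a) := by rw [Real.sqrt_sq ha.le]
          _ = Real.sqrt (a ^ 2 * (t / a)) := (Real.sqrt_mul (sq_nonneg a) _).symm
          _ = Real.sqrt (a * t) := by congr 1; field_simp
      calc ‖E a‖ ≤ μ ^ 2 / 2 * a * |X a - 0| := hstep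
        _ = μ ^ 2 / 2 * (a * X a) := by rw [sub_zero, abs_of_nonneg hXnn]; ring
        _ ≤ μ ^ 2 / 2 * Real.sqrt (a * t) := by nlinarith [sq_nonneg μ]
    have hg : Tendsto (fun a : ℝ => μ ^ 2 / 2 * Real.sqrt (a * t)) (nhdsWithin 0 (Set.Ioi 0))
        (nhds 0) := by
      have : Continuous (fun a : ℝ => μ ^ 2 / 2 * Real.sqrt (a * t)) :=
        continuous_const.mul (Real.continuous_sqrt.comp (continuous_id.mul continuous_const))
      have h1 := (this.tendsto 0).mono_left (nhdsWithin_le_nhds (s := Set.Ioi (0:ℝ)))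
      simpa using h1
    exact squeeze_zero_norm' hbound hg
  have hmain : Tendsto (fun a => (2 / π) * (Real.arctan (X a) - E a))
      (nhdsWithin 0 (Set.Ioi 0)) (nhds 1) := by
    have := ((harctan.sub hE0).const_mul (2 / π))
    convert this using 2
    rw [sub_zero]
    field_simp
  exact hmain.congr (fun a => by rw [hid a])
end

section
/- Fix 0 < a < b and μ ≠ 0, and set Ψ_{[a,b]}(μ√r) = (2/π) ∫₀^{√((b-a)/a)} e^{-(μ²·r·a/2)(1+y²)}/(1+y²) dy. Then lim_{r→∞} (1/r) · log Ψ_{[a,b]}(μ√r) = -μ²·a/2. -/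
open Real Filter

theorem stmt_2 (a b μ : ℝ) (ha : 0 < a) (hab : a < b) (hμ : μ ≠ 0) :
    Tendsto (fun r : ℝ =>
        (1 / r) * Real.log ((2 / π) * ∫ y in (0:ℝ)..Real.sqrt ((b - a) / a),
          Real.exp (-(μ ^ 2 * r * a / 2) * (1 + y ^ 2)) / (1 + y ^ 2)))
      atTop (nhds (-(μ ^ 2 * a / 2))) := by
  set c : ℝ := μ ^ 2 * a / 2 with hc
  have hμ2 : 0 < μ ^ 2 := by positivity
  have hc0 : 0 < c := by rw [hc]; positivity
  set T : ℝ := Real.sqrt ((b - a) / a) with hTdef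
  have hT0 : 0 < T := Real.sqrt_pos.2 (div_pos (by linarith) ha)
  have hcont : ∀ r : ℝ, Continuous fun y : ℝ => Real.exp (-(c * r) * y ^ 2) / (1 + y ^ 2) := by
    intro r
    apply Continuous.div (by continuity) (by continuity)
    intro y; positivity
  set J : ℝ → ℝ := fun r => ∫ y in (0:ℝ)..T, Real.exp (-(c * r) * y ^ 2) / (1 + y ^ 2) with hJ
  have hJpos : ∀ r : ℝ, 0 < J r := fun r =>
    intervalIntegral.intervalIntegral_pos_of_pos ((hcont r).intervalIntegrable _ _)
      (fun x => div_pos (Real.exp_pos _) (by positivity)) hT0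
  -- rewrite of the integral
  have key : ∀ r : ℝ, r ≠ 0 →
      (1 / r) * Real.log ((2 / π) * ∫ y in (0:ℝ)..T,
          Real.exp (-(μ ^ 2 * r * a / 2) * (1 + y ^ 2)) / (1 + y ^ 2))
      = (1 / r) * Real.log (2 / π) + -c + (1 / r) * Real.log (J r) := by
    intro r hr
    have h1 : (∫ y in (0:ℝ)..T, Real.exp (-(μ ^ 2 * r * a / 2) * (1 + y ^ 2)) / (1 + y ^ 2))
        = Real.exp (-(c * r)) * J r := by
      rw [hJ]
      rw [← intervalIntegral.integral_const_mul]
      apply intervalIntegral.integral_congr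
      intro y _
      dsimp only
      rw [← mul_div_assoc, ← Real.exp_add]
      congr 1
      rw [hc]; ring
    rw [h1, Real.log_mul (by positivity) (mul_pos (Real.exp_pos _) (hJpos r)).ne',
      Real.log_mul (Real.exp_ne_zero _) (ne_of_gt (hJpos r)), Real.log_exp]
    field_simp
    ring_nf
  -- limit of (1/r) * log (J r)
  have hlogdiv : Tendsto (fun r : ℝ => Real.log r / r) atTop (nhds 0) :=
    Real.isLittleO_log_id_atTop.tendsto_div_nhds_zero
  have hinv : Tendsto (fun r : ℝ => 1 / r) atTop (nhds 0) := by
    simpa only [one_div] using tendsto_inv_atTop_zero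
  have hmul : ∀ L : ℝ, Tendsto (fun r : ℝ => (1 / r) * L) atTop (nhds 0) := by
    intro L
    simpa using hinv.mul_const L
  have hJlim : Tendsto (fun r : ℝ => (1 / r) * Real.log (J r)) atTop (nhds 0) := by
    set K : ℝ := Real.exp (-c) / (1 + T ^ 2) with hK
    have hK0 : 0 < K := by rw [hK]; positivity
    apply tendsto_of_tendsto_of_tendsto_of_le_of_le'
      (g := fun r : ℝ => (1 / r) * (Real.log K - Real.log r / 2))
      (h := fun r : ℝ => (1 / r) * Real.log T)
    · -- lower sequence tends to 0
      have h1 : Tendsto (fun r : ℝ => Real.log K * (1 / r) - Real.log r / r * (1 / 2))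
          atTop (nhds 0) := by
        have := ((hinv.const_mul (Real.log K)).sub (hlogdiv.mul_const (1 / 2)))
        simpa using this
      refine h1.congr fun r => by ring
    · exact hmul (Real.log T)
    · -- eventual lower bound
      filter_upwards [eventually_ge_atTop (1 : ℝ), eventually_ge_atTop (1 / T ^ 2)]
        with r hr1 hr2
      have r0 : (0 : ℝ) < r := lt_of_lt_of_le one_pos hr1
      have hsr : 0 < Real.sqrt r := Real.sqrt_pos.2 r0
      set s : ℝ := (Real.sqrt r)⁻¹ with hs
      have hs0 : 0 < s := by positivity
      have hrT : (1 : ℝ) ≤ r * T ^ 2 := by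
        rw [div_le_iff₀ (by positivity)] at hr2; linarith
      have h2 : (1 : ℝ) ≤ Real.sqrt r * T := by
        have h3 := Real.sqrt_le_sqrt hrT
        rwa [Real.sqrt_one, Real.sqrt_mul r0.le, Real.sqrt_sq hT0.le] at h3
      have hsT : s ≤ T := by
        rw [hs, inv_le_iff_one_le_mul₀' hsr]
        linarith [h2]
      have hs2 : s ^ 2 = 1 / r := by
        rw [hs, ← Real.sqrt_inv, Real.sq_sqrt (by positivity)]
        exact one_div r ▸ rfl
      -- pointwise lower bound on [0, s]
      have hbound : ∀ y ∈ Set.Icc (0:ℝ) s,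
          K ≤ Real.exp (-(c * r) * y ^ 2) / (1 + y ^ 2) := by
        intro y hy
        obtain ⟨hy0, hys⟩ := hy
        have hy2s : y ^ 2 ≤ s ^ 2 := by nlinarith
        have hy2T : y ^ 2 ≤ T ^ 2 := by nlinarith
        have hnum : Real.exp (-c) ≤ Real.exp (-(c * r) * y ^ 2) := by
          apply Real.exp_le_exp.2
          have : c * r * y ^ 2 ≤ c := by
            have h4 : y ^ 2 ≤ 1 / r := hs2 ▸ hy2s
            have h5 : c * r * y ^ 2 ≤ c * r * (1 / r) :=
              mul_le_mul_of_nonneg_left h4 (by positivity)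
            have h6 : c * r * (1 / r) = c := by field_simp
            linarith
          linarith
        rw [hK]
        exact div_le_div₀ (Real.exp_pos _).le hnum (by positivity) (by linarith)
      have hint1 : K * s ≤ ∫ y in (0:ℝ)..s, Real.exp (-(c * r) * y ^ 2) / (1 + y ^ 2) := by
        have h8 := intervalIntegral.integral_mono_on hs0.le
          (intervalIntegrable_const (μ := MeasureTheory.volume) (c := K))
          ((hcont r).intervalIntegrable 0 s) hbound
        rw [intervalIntegral.integral_const, smul_eq_mul, sub_zero] at h8
        calc K * s = s * K := mul_comm _ _
          _ ≤ _ := h8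
      have hint2 : (∫ y in (0:ℝ)..s, Real.exp (-(c * r) * y ^ 2) / (1 + y ^ 2)) ≤ J r := by
        rw [hJ]
        apply intervalIntegral.integral_mono_interval le_rfl hs0.le hsT
        · exact MeasureTheory.ae_of_all _ fun y => by positivity
        · exact (hcont r).intervalIntegrable 0 T
      have hKs : K * s ≤ J r := le_trans hint1 hint2
      have hlogKs : Real.log (K * s) = Real.log K - Real.log r / 2 := by
        rw [Real.log_mul (ne_of_gt hK0) (ne_of_gt hs0), hs, Real.log_inv,
          Real.log_sqrt r0.le]
        ring
      have hlogle : Real.log (K * s) ≤ Real.log (J r) :=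
        Real.log_le_log (by positivity) hKs
      rw [hlogKs] at hlogle
      exact mul_le_mul_of_nonneg_left hlogle (by positivity)
    · -- eventual upper bound
      filter_upwards [eventually_ge_atTop (1 : ℝ)] with r hr1
      have r0 : (0 : ℝ) < r := lt_of_lt_of_le one_pos hr1
      have hJT : J r ≤ T := by
        have hb : ∀ y ∈ Set.Icc (0:ℝ) T,
            Real.exp (-(c * r) * y ^ 2) / (1 + y ^ 2) ≤ 1 := by
          intro y hy
          rw [div_le_one (by positivity)]
          have h7 : Real.exp (-(c * r) * y ^ 2) ≤ 1 := by
            apply Real.exp_le_one_iff.2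
            have : 0 ≤ c * r * y ^ 2 := by positivity
            linarith
          nlinarith
        have h9 := intervalIntegral.integral_mono_on hT0.le
          ((hcont r).intervalIntegrable 0 T)
          (intervalIntegrable_const (μ := MeasureTheory.volume) (c := (1:ℝ))) hb
        rw [intervalIntegral.integral_const, smul_eq_mul, sub_zero, mul_one] at h9
        rw [hJ]
        exact h9
      have hlogle : Real.log (J r) ≤ Real.log T := Real.log_le_log (hJpos r) hJT
      exact mul_le_mul_of_nonneg_left hlogle (by positivity)
  -- combine
  have hsum : Tendsto (fun r : ℝ =>
      (1 / r) * Real.log (2 / π) + -c + (1 / r) * Real.log (J r)) atTop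
      (nhds (0 + -c + 0)) :=
    ((hmul (Real.log (2 / π))).add tendsto_const_nhds).add hJlim
  rw [zero_add, add_zero] at hsum
  apply hsum.congr'
  filter_upwards [eventually_gt_atTop (0 : ℝ)] with r hr
  exact (key r (ne_of_gt hr)).symm
end

section
/- Fix 0 < a < b and μ ≠ 0, and set Ψ_{[a,b]}(μ√r) = (2/π) ∫₀^{√((b-a)/a)} e^{-(μ²·r·a/2)(1+y²)}/(1+y²) dy. Then lim_{r→∞} e^{μ²·r·a/2} · √r · Ψ_{[a,b]}(μ√r) = √(2/(π·μ²·a)). -/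
open Real Filter MeasureTheory

theorem stmt_3 (a b μ : ℝ) (ha : 0 < a) (hab : a < b) (hμ : μ ≠ 0) :
    Tendsto (fun r : ℝ =>
        Real.exp (μ ^ 2 * r * a / 2) * Real.sqrt r *
          ((2 / π) * ∫ y in (0:ℝ)..Real.sqrt ((b - a) / a),
            Real.exp (-(μ ^ 2 * r * a / 2) * (1 + y ^ 2)) / (1 + y ^ 2)))
      atTop (nhds (Real.sqrt (2 / (π * μ ^ 2 * a)))) := by
  have hπ : (0:ℝ) < π := Real.pi_pos
  set c : ℝ := μ ^ 2 * a / 2 with hcdef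
  have hμ2 : 0 < μ ^ 2 := by
    rcases lt_or_gt_of_ne hμ with h | h <;> nlinarith
  have hc0 : 0 < c := by rw [hcdef]; nlinarith
  set T : ℝ := Real.sqrt ((b - a) / a) with hTdef
  have hT : 0 < T := Real.sqrt_pos.2 (div_pos (by linarith) ha)
  -- rewrite the limit value
  have hval : Real.sqrt (2 / (π * μ ^ 2 * a)) = (2 / π) * (Real.sqrt (π / c) / 2) := by
    have h1 : 2 / (π * μ ^ 2 * a) = (π / c) / π ^ 2 := by
      have hμ2 : (0:ℝ) < μ ^ 2 := by positivity
      field_simp [hcdef]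
      ring
    rw [h1, Real.sqrt_div (by positivity) (π ^ 2), Real.sqrt_sq hπ.le]
    ring
  rw [hval]
  -- the key dominated convergence limit
  have key : Tendsto (fun r : ℝ => ∫ u : ℝ,
      (Set.Ioc (0:ℝ) (T * Real.sqrt r)).indicator
        (fun u => Real.exp (-c * u ^ 2) / (1 + u ^ 2 / r)) u) atTop
      (nhds (∫ u : ℝ, (Set.Ioi (0:ℝ)).indicator (fun u => Real.exp (-c * u ^ 2)) u)) := by
    apply tendsto_integral_filter_of_dominated_convergence
      ((Set.Ioi (0:ℝ)).indicator fun u => Real.exp (-c * u ^ 2))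
    · filter_upwards [eventually_ge_atTop (1:ℝ)] with r hr
      have hr0 : (0:ℝ) < r := lt_of_lt_of_le one_pos hr
      have hcont : Continuous fun u : ℝ => Real.exp (-c * u ^ 2) / (1 + u ^ 2 / r) := by
        apply Continuous.div (by continuity) (by continuity)
        intro u
        have : (0:ℝ) < 1 + u ^ 2 / r := by positivity
        exact this.ne'
      exact (hcont.aestronglyMeasurable).indicator measurableSet_Ioc
    · filter_upwards [eventually_ge_atTop (1:ℝ)] with r hr
      have hr0 : (0:ℝ) < r := lt_of_lt_of_le one_pos hr
      filter_upwards with u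
      by_cases hu : u ∈ Set.Ioc (0:ℝ) (T * Real.sqrt r)
      · rw [Set.indicator_of_mem hu]
        have hu0 : (0:ℝ) < u := hu.1
        have hden : (1:ℝ) ≤ 1 + u ^ 2 / r := by
          have : (0:ℝ) ≤ u ^ 2 / r := by positivity
          linarith
        have hle : Real.exp (-c * u ^ 2) / (1 + u ^ 2 / r) ≤ Real.exp (-c * u ^ 2) :=
          div_le_self (Real.exp_nonneg _) hden
        have hnn : (0:ℝ) ≤ Real.exp (-c * u ^ 2) / (1 + u ^ 2 / r) := by positivity
        rw [Real.norm_eq_abs, abs_of_nonneg hnn,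
          Set.indicator_of_mem (Set.mem_Ioi.2 hu0)]
        exact hle
      · rw [Set.indicator_of_notMem hu, norm_zero]
        exact Set.indicator_nonneg (fun x _ => Real.exp_nonneg _) u
    · exact (integrable_exp_neg_mul_sq hc0).indicator measurableSet_Ioi
    · filter_upwards with u
      by_cases hu : 0 < u
      · rw [Set.indicator_of_mem (Set.mem_Ioi.2 hu)]
        have hlim : Tendsto (fun r : ℝ => Real.exp (-c * u ^ 2) / (1 + u ^ 2 / r)) atTop
            (nhds (Real.exp (-c * u ^ 2))) := by
          have h2 : Tendsto (fun r : ℝ => u ^ 2 / r) atTop (nhds 0) :=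
            Tendsto.div_atTop tendsto_const_nhds tendsto_id
          have h3 : Tendsto (fun r : ℝ => 1 + u ^ 2 / r) atTop (nhds 1) := by
            simpa using tendsto_const_nhds.add h2
          have := Tendsto.div (tendsto_const_nhds
            (x := Real.exp (-c * u ^ 2)) (f := atTop)) h3 one_ne_zero
          simpa [Pi.div_def] using this
        apply hlim.congr'
        have hsqrt : Tendsto Real.sqrt atTop atTop :=
          tendsto_atTop_atTop_of_monotone (fun x y h => Real.sqrt_le_sqrt h)
            (fun q => ⟨q ^ 2, by rw [Real.sqrt_sq_eq_abs]; exact le_abs_self q⟩)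
        have hTr : Tendsto (fun r : ℝ => T * Real.sqrt r) atTop atTop :=
          hsqrt.const_mul_atTop hT
        filter_upwards [hTr.eventually_ge_atTop u] with r hr
        rw [Set.indicator_of_mem (Set.mem_Ioc.2 ⟨hu, hr⟩)]
      · have h0 : ∀ r : ℝ, (Set.Ioc (0:ℝ) (T * Real.sqrt r)).indicator
            (fun u => Real.exp (-c * u ^ 2) / (1 + u ^ 2 / r)) u = 0 := by
          intro r
          apply Set.indicator_of_notMem
          intro h
          exact hu h.1
        rw [Set.indicator_of_notMem (by simpa using hu)]
        simp only [h0]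
        exact tendsto_const_nhds
  -- compute the limit integral
  have hIoi : (∫ u : ℝ, (Set.Ioi (0:ℝ)).indicator (fun u => Real.exp (-c * u ^ 2)) u)
      = Real.sqrt (π / c) / 2 := by
    rw [integral_indicator measurableSet_Ioi]
    exact integral_gaussian_Ioi c
  rw [hIoi] at key
  -- conclude by eventual equality
  apply Tendsto.congr' _ (key.const_mul (2 / π))
  filter_upwards [eventually_ge_atTop (1:ℝ)] with r hr
  have hr0 : (0:ℝ) < r := lt_of_lt_of_le one_pos hr
  have hsr : (0:ℝ) < Real.sqrt r := Real.sqrt_pos.2 hr0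
  -- step A: pull out exp(-E)
  have hA : (∫ y in (0:ℝ)..T, Real.exp (-(μ ^ 2 * r * a / 2) * (1 + y ^ 2)) / (1 + y ^ 2))
      = Real.exp (-(μ ^ 2 * r * a / 2)) *
        ∫ y in (0:ℝ)..T, Real.exp (-(c * r) * y ^ 2) / (1 + y ^ 2) := by
    rw [← intervalIntegral.integral_const_mul]
    apply intervalIntegral.integral_congr
    intro y _
    dsimp only
    rw [← mul_div_assoc, ← Real.exp_add]
    congr 2
    simp only [hcdef]
    ring
  -- step B: change of variables
  have hB : Real.sqrt r * (∫ y in (0:ℝ)..T, Real.exp (-(c * r) * y ^ 2) / (1 + y ^ 2))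
      = ∫ u in (0:ℝ)..(T * Real.sqrt r), Real.exp (-c * u ^ 2) / (1 + u ^ 2 / r) := by
    have := intervalIntegral.integral_comp_div
      (a := (0:ℝ)) (b := T * Real.sqrt r)
      (f := fun y => Real.exp (-(c * r) * y ^ 2) / (1 + y ^ 2)) hsr.ne'
    rw [zero_div, mul_div_assoc, div_self hsr.ne', mul_one] at this
    rw [smul_eq_mul] at this
    rw [← this]
    apply intervalIntegral.integral_congr
    intro u _
    dsimp only
    have hsq : (u / Real.sqrt r) ^ 2 = u ^ 2 / r := by
      rw [div_pow, Real.sq_sqrt hr0.le]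
    rw [hsq]
    congr 2
    field_simp
  -- step C: interval integral as indicator integral
  have hC : (∫ u in (0:ℝ)..(T * Real.sqrt r), Real.exp (-c * u ^ 2) / (1 + u ^ 2 / r))
      = ∫ u : ℝ, (Set.Ioc (0:ℝ) (T * Real.sqrt r)).indicator
          (fun u => Real.exp (-c * u ^ 2) / (1 + u ^ 2 / r)) u := by
    rw [intervalIntegral.integral_of_le (by positivity), integral_indicator measurableSet_Ioc]
  rw [← hC, ← hB, hA]
  have hexp : Real.exp (μ ^ 2 * r * a / 2) * Real.exp (-(μ ^ 2 * r * a / 2)) = 1 := by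
    rw [← Real.exp_add]; simp
  set J := ∫ y in (0:ℝ)..T, Real.exp (-(c * r) * y ^ 2) / (1 + y ^ 2) with hJ
  rw [Real.exp_neg]
  field_simp
end

section
/- Let μ ≠ 0, t > 0, and let (γ_r)_{r>0} be positive numbers with γ_r → 0 and r·γ_r → ∞ as r → ∞. For z > 0 define, for r large enough so that z/(rγ_r) ∈ [0,t], P_r(z) = (2/π) ∫₀^{√((t - z/(rγ_r))/(z/(rγ_r)))} e^{-(μ²·z/(2γ_r))(1+y²)}/(1+y²) dy. Then lim_{r→∞} γ_r · log P_r(z) = -μ²·z/2. -/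
open Real Filter

set_option maxHeartbeats 1000000 in
theorem stmt_6 (μ t : ℝ) (hμ : μ ≠ 0) (ht : 0 < t)
    (γ : ℝ → ℝ) (hγpos : ∀ r > 0, 0 < γ r)
    (hγ0 : Tendsto γ atTop (nhds 0))
    (hrγ : Tendsto (fun r => r * γ r) atTop atTop)
    (z : ℝ) (hz : 0 < z) :
    Tendsto (fun r : ℝ =>
        γ r * Real.log ((2 / π) *
          ∫ y in (0:ℝ)..Real.sqrt ((t - z / (r * γ r)) / (z / (r * γ r))),
            Real.exp (-(μ ^ 2 * z / (2 * γ r)) * (1 + y ^ 2)) / (1 + y ^ 2)))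
      atTop (nhds (-(μ ^ 2 * z / 2))) := by
  have hμ2 : 0 < μ ^ 2 := by positivity
  have hπ : (0:ℝ) < π := Real.pi_pos
  -- the lower bounding sequence tends to the limit
  have h1 : Tendsto (fun r => γ r * Real.log (γ r) / 2) atTop (nhds 0) := by
    have := (Real.continuous_mul_log.continuousAt (x := 0)).tendsto.comp hγ0
    simp only [Real.log_zero, mul_zero] at this
    simpa using this.div_const 2
  have h2 : Tendsto (fun r => γ r * Real.log π) atTop (nhds 0) := by
    simpa using hγ0.mul_const (Real.log π)
  have h3 : Tendsto (fun r => μ ^ 2 * z / 2 * (1 + γ r)) atTop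
      (nhds (μ ^ 2 * z / 2)) := by
    have := (tendsto_const_nhds (x := (1:ℝ)) (f := atTop)).add hγ0
    simpa using this.const_mul (μ ^ 2 * z / 2)
  have hlow : Tendsto (fun r => γ r * Real.log (γ r) / 2 - γ r * Real.log π
      - μ ^ 2 * z / 2 * (1 + γ r)) atTop (nhds (-(μ ^ 2 * z / 2))) := by
    have := (h1.sub h2).sub h3
    simpa using this
  refine tendsto_of_tendsto_of_tendsto_of_le_of_le' hlow tendsto_const_nhds ?_ ?_
  · -- lower bound
    have hA : ∀ᶠ r : ℝ in atTop, 0 < r := eventually_gt_atTop 0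
    have hB : ∀ᶠ r : ℝ in atTop, γ r < 1 := hγ0.eventually_lt_const one_pos
    have hC : ∀ᶠ r : ℝ in atTop, 2 * z / t ≤ r * γ r := hrγ.eventually_ge_atTop _
    filter_upwards [hA, hB, hC] with r hr hg1 hR
    have hg : 0 < γ r := hγpos r hr
    set g := γ r with hgdef
    set R := r * γ r with hRdef
    have hRpos : 0 < R := lt_of_lt_of_le (by positivity) hR
    set a := z / R with hadef
    have ha : 0 < a := by positivity
    have hat : a ≤ t / 2 := by
      rw [hadef, div_le_div_iff₀ hRpos two_pos]
      have h2z : 2 * z / t * t ≤ R * t := by gcongr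
      have h2z' : 2 * z / t * t = 2 * z := by field_simp
      linarith
    set c := μ ^ 2 * z / (2 * g) with hcdef
    have hc : 0 < c := by positivity
    have hgc : g * c = μ ^ 2 * z / 2 := by rw [hcdef]; field_simp
    set b := Real.sqrt ((t - a) / a) with hbdef
    have hb1 : (1:ℝ) ≤ (t - a) / a := by
      rw [le_div_iff₀ ha]; linarith
    set δ := Real.sqrt g with hδdef
    have hδ : 0 < δ := Real.sqrt_pos.2 hg
    have hδ1 : δ ≤ 1 := by
      rw [hδdef, show (1:ℝ) = Real.sqrt 1 by simp]
      exact Real.sqrt_le_sqrt hg1.le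
    have hδb : δ ≤ b := by
      refine Real.sqrt_le_sqrt (hg1.le.trans hb1)
    have hδsq : δ ^ 2 = g := Real.sq_sqrt hg.le
    set f : ℝ → ℝ := fun y => Real.exp (-c * (1 + y ^ 2)) / (1 + y ^ 2) with hfdef
    have hfc : Continuous f := by
      have h1 : Continuous fun y : ℝ => Real.exp (-c * (1 + y ^ 2)) := by fun_prop
      have h2 : Continuous fun y : ℝ => 1 + y ^ 2 := by fun_prop
      exact h1.div h2 (fun y => by positivity)
    have hfnonneg : ∀ y, 0 ≤ f y := fun y => by
      have : (0:ℝ) < 1 + y ^ 2 := by positivity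
      positivity
    set E := Real.exp (-c * (1 + g)) with hEdef
    have hE : 0 < E := Real.exp_pos _
    -- lower bound on the piece of the integral
    have key1 : δ * (E / 2) ≤ ∫ y in (0:ℝ)..δ, f y := by
      have hmono : ∀ y ∈ Set.Icc (0:ℝ) δ, E / 2 ≤ f y := by
        intro y hy
        have hy2 : y ^ 2 ≤ g := by
          rw [← hδsq]; exact pow_le_pow_left₀ hy.1 hy.2 2
        have h1g : (1:ℝ) + y ^ 2 ≤ 2 := by nlinarith
        have hEle : E ≤ Real.exp (-c * (1 + y ^ 2)) := by
          apply Real.exp_le_exp.2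
          nlinarith
        rw [hfdef]
        have hpos : (0:ℝ) < 1 + y ^ 2 := by positivity
        calc E / 2 ≤ E / (1 + y ^ 2) := by
              apply div_le_div_of_nonneg_left hE.le hpos h1g
          _ ≤ Real.exp (-c * (1 + y ^ 2)) / (1 + y ^ 2) := by gcongr
      calc δ * (E / 2) = (δ - 0) • (E / 2) := by ring_nf
        _ = ∫ _ in (0:ℝ)..δ, (E / 2) := (intervalIntegral.integral_const _).symm
        _ ≤ ∫ y in (0:ℝ)..δ, f y := by
            apply intervalIntegral.integral_mono_on hδ.le
              intervalIntegrable_const (hfc.intervalIntegrable _ _) hmono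
    have key2 : (∫ y in (0:ℝ)..δ, f y) ≤ ∫ y in (0:ℝ)..b, f y := by
      have hsplit : (∫ y in (0:ℝ)..δ, f y) + (∫ y in δ..b, f y)
          = ∫ y in (0:ℝ)..b, f y :=
        intervalIntegral.integral_add_adjacent_intervals
          (hfc.intervalIntegrable _ _) (hfc.intervalIntegrable _ _)
      have hpos2 : 0 ≤ ∫ y in δ..b, f y :=
        intervalIntegral.integral_nonneg hδb (fun y _ => hfnonneg y)
      linarith
    have hIlb : δ * (E / 2) ≤ ∫ y in (0:ℝ)..b, f y := key1.trans key2
    have hIpos : 0 < ∫ y in (0:ℝ)..b, f y := lt_of_lt_of_le (by positivity) hIlb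
    -- now the log bound
    have hPlb : δ * E / π ≤ 2 / π * ∫ y in (0:ℝ)..b, f y := by
      rw [div_le_iff₀ hπ] at *
      calc δ * E = 2 * (δ * (E/2)) := by ring
        _ ≤ 2 * ∫ y in (0:ℝ)..b, f y := by gcongr
        _ = 2 / π * (∫ y in (0:ℝ)..b, f y) * π := by field_simp
    have hlogP : Real.log δ + (-c * (1 + g)) - Real.log π
        ≤ Real.log (2 / π * ∫ y in (0:ℝ)..b, f y) := by
      have := Real.log_le_log (by positivity) hPlb
      rwa [Real.log_div (by positivity) hπ.ne', Real.log_mul hδ.ne' hE.ne',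
        hEdef, Real.log_exp] at this
    have hlogδ : Real.log δ = Real.log g / 2 := by
      rw [hδdef, Real.log_sqrt hg.le]
    have hfinal : g * Real.log (γ r) / 2 * 1 - g * Real.log π
        - μ ^ 2 * z / 2 * (1 + g)
        ≤ g * Real.log (2 / π * ∫ y in (0:ℝ)..b, f y) := by
      have := mul_le_mul_of_nonneg_left hlogP hg.le
      calc g * Real.log (γ r) / 2 * 1 - g * Real.log π - μ ^ 2 * z / 2 * (1 + g)
          = g * (Real.log δ + (-c * (1 + g)) - Real.log π) := by
            rw [hlogδ, ← hgdef]
            have : g * (c * (1 + g)) = μ ^ 2 * z / 2 * (1 + g) := by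
              rw [← mul_assoc, hgc]
            nlinarith [this]
        _ ≤ _ := this
    simpa [hfdef, hbdef, hadef, hRdef, hcdef] using hfinal
  · -- upper bound
    have hA : ∀ᶠ r : ℝ in atTop, 0 < r := eventually_gt_atTop 0
    have hC : ∀ᶠ r : ℝ in atTop, 2 * z / t ≤ r * γ r := hrγ.eventually_ge_atTop _
    filter_upwards [hA, hC] with r hr hR
    have hg : 0 < γ r := hγpos r hr
    set g := γ r with hgdef
    set R := r * γ r with hRdef
    set a := z / R with hadef
    set c := μ ^ 2 * z / (2 * g) with hcdef
    have hc : 0 < c := by positivity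
    have hgc : g * c = μ ^ 2 * z / 2 := by rw [hcdef]; field_simp
    set b := Real.sqrt ((t - a) / a) with hbdef
    have hb0 : 0 ≤ b := Real.sqrt_nonneg _
    set f : ℝ → ℝ := fun y => Real.exp (-c * (1 + y ^ 2)) / (1 + y ^ 2) with hfdef
    have hfc : Continuous f := by
      have h1 : Continuous fun y : ℝ => Real.exp (-c * (1 + y ^ 2)) := by fun_prop
      have h2 : Continuous fun y : ℝ => 1 + y ^ 2 := by fun_prop
      exact h1.div h2 (fun y => by positivity)
    have hfnonneg : ∀ y, 0 ≤ f y := fun y => by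
      have : (0:ℝ) < 1 + y ^ 2 := by positivity
      positivity
    -- positivity of the integral (reuse lower bound machinery, cheap version)
    have hRpos : 0 < R := lt_of_lt_of_le (by positivity) hR
    have ha : 0 < a := by positivity
    have hat : a ≤ t / 2 := by
      rw [hadef, div_le_div_iff₀ hRpos two_pos]
      have h2z : 2 * z / t * t ≤ R * t := by gcongr
      have h2z' : 2 * z / t * t = 2 * z := by field_simp
      linarith
    have hb : 0 < b := Real.sqrt_pos.2 (by
      rw [lt_div_iff₀ ha]; linarith)
    have hIpos : 0 < ∫ y in (0:ℝ)..b, f y := by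
      apply intervalIntegral.intervalIntegral_pos_of_pos_on
        (hfc.intervalIntegrable _ _) (fun y _ => ?_) hb
      have : (0:ℝ) < 1 + y ^ 2 := by positivity
      positivity
    have hub : (∫ y in (0:ℝ)..b, f y) ≤ Real.exp (-c) * (π / 2) := by
      have hmono : ∀ y ∈ Set.Icc (0:ℝ) b, f y ≤ Real.exp (-c) * (1 / (1 + y ^ 2)) := by
        intro y hy
        have hpos : (0:ℝ) < 1 + y ^ 2 := by positivity
        rw [hfdef]
        have : Real.exp (-c * (1 + y ^ 2)) ≤ Real.exp (-c) := by
          apply Real.exp_le_exp.2; nlinarith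
        calc Real.exp (-c * (1 + y ^ 2)) / (1 + y ^ 2)
            ≤ Real.exp (-c) / (1 + y ^ 2) := by gcongr
          _ = Real.exp (-c) * (1 / (1 + y ^ 2)) := by ring
      calc (∫ y in (0:ℝ)..b, f y)
          ≤ ∫ y in (0:ℝ)..b, Real.exp (-c) * (1 / (1 + y ^ 2)) := by
            apply intervalIntegral.integral_mono_on hb0
              (hfc.intervalIntegrable _ _) ?_ hmono
            apply Continuous.intervalIntegrable
            apply Continuous.mul continuous_const
            apply Continuous.div continuous_const (by continuity) (fun y => by positivity)
        _ = Real.exp (-c) * (Real.arctan b - Real.arctan 0) := by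
            rw [intervalIntegral.integral_const_mul, integral_one_div_one_add_sq]
        _ ≤ Real.exp (-c) * (π / 2) := by
            gcongr
            simp only [Real.arctan_zero, sub_zero]
            exact (Real.arctan_lt_pi_div_two b).le
    have hPub : 2 / π * (∫ y in (0:ℝ)..b, f y) ≤ Real.exp (-c) := by
      rw [div_mul_eq_mul_div, div_le_iff₀ hπ]
      calc 2 * ∫ y in (0:ℝ)..b, f y ≤ 2 * (Real.exp (-c) * (π / 2)) := by gcongr
        _ = Real.exp (-c) * π := by ring
    have hlogP : Real.log (2 / π * ∫ y in (0:ℝ)..b, f y) ≤ -c := by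
      have := Real.log_le_log (by positivity) hPub
      rwa [Real.log_exp] at this
    have hfinal : g * Real.log (2 / π * ∫ y in (0:ℝ)..b, f y) ≤ -(μ ^ 2 * z / 2) := by
      have := mul_le_mul_of_nonneg_left hlogP hg.le
      calc g * Real.log (2 / π * ∫ y in (0:ℝ)..b, f y) ≤ g * (-c) := this
        _ = -(μ ^ 2 * z / 2) := by rw [mul_neg, hgc]
    simpa [hfdef, hbdef, hadef, hRdef, hcdef] using hfinal
end

section
/- Let μ ≠ 0, t > 0. The density f_{μ,t}(a) = e^{-μ²t/2}/(π√(a(t-a))) + (μ²/(2π)) ∫_a^t e^{-μ²y/2}/√(a(y-a)) dy, for a ∈ (0,t), satisfies the lower bound f_{μ,t}(a) ≥ (e^{-μ²a/2} - e^{-μ²t/2})/(π√(a(t-a))) for all a ∈ (0,t). -/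
open Real MeasureTheory

/-- Density of the last zero crossing time of a Brownian motion with drift `μ` on `[0,t]`. -/
noncomputable def lastZeroDensity (μ t a : ℝ) : ℝ :=
  Real.exp (-(μ ^ 2) * t / 2) / (π * Real.sqrt (a * (t - a))) +
    (μ ^ 2 / (2 * π)) * ∫ y in a..t, Real.exp (-(μ ^ 2) * y / 2) / Real.sqrt (a * (y - a))

theorem stmt_7 (μ t : ℝ) (hμ : μ ≠ 0) (ht : 0 < t) :
    ∀ a ∈ Set.Ioo 0 t,
      (Real.exp (-(μ ^ 2) * a / 2) - Real.exp (-(μ ^ 2) * t / 2)) /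
          (π * Real.sqrt (a * (t - a)))
        ≤ lastZeroDensity μ t a := by
  intro a ha
  obtain ⟨ha0, hat⟩ := ha
  set c : ℝ := μ ^ 2 with hc
  have hc0 : (0 : ℝ) < c := by positivity
  clear_value c
  have hD : 0 < a * (t - a) := mul_pos ha0 (by linarith)
  have hsD : 0 < Real.sqrt (a * (t - a)) := Real.sqrt_pos.2 hD
  have hsa : 0 < Real.sqrt a := Real.sqrt_pos.2 ha0
  have hπ : (0 : ℝ) < π := Real.pi_pos
  -- integrability of the singular integrand
  have hbase : IntervalIntegrable (fun x : ℝ => x ^ (-(1/2) : ℝ)) volume 0 (t - a) :=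
    intervalIntegral.intervalIntegrable_rpow' (by norm_num)
  have hshift : IntervalIntegrable (fun x : ℝ => (x - a) ^ (-(1/2) : ℝ)) volume a t := by
    have := hbase.comp_sub_right a
    simpa using this
  have hg : IntervalIntegrable
      (fun x : ℝ => (Real.sqrt a)⁻¹ * (x - a) ^ (-(1/2) : ℝ)) volume a t :=
    hshift.const_mul _
  have hf_int : IntervalIntegrable
      (fun y : ℝ => Real.exp (-c * y / 2) / Real.sqrt (a * (y - a))) volume a t := by
    apply hg.mono_fun
    · apply Measurable.aestronglyMeasurable
      exact (Real.measurable_exp.comp (by fun_prop)).div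
        ((measurable_const.mul (measurable_id.sub measurable_const)).sqrt)
    · rw [Set.uIoc_of_le hat.le]
      filter_upwards [ae_restrict_mem measurableSet_Ioc] with x hx
      have hxa : a < x := hx.1
      have hxa0 : (0 : ℝ) < x - a := by linarith
      have hsq : Real.sqrt (a * (x - a)) = Real.sqrt a * Real.sqrt (x - a) :=
        Real.sqrt_mul ha0.le _
      have hrpow : (x - a) ^ (-(1/2) : ℝ) = (Real.sqrt (x - a))⁻¹ := by
        rw [Real.rpow_neg hxa0.le, ← Real.sqrt_eq_rpow]
      have hs2 : 0 < Real.sqrt (x - a) := Real.sqrt_pos.2 hxa0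
      have hexp : Real.exp (-c * x / 2) ≤ 1 := by
        rw [Real.exp_le_one_iff]
        nlinarith [hc0, ha0, hxa]
      rw [Real.norm_eq_abs, Real.norm_eq_abs, abs_of_nonneg (by positivity),
        abs_of_nonneg (by positivity), hsq, hrpow]
      rw [div_le_iff₀ (by positivity)]
      calc Real.exp (-c * x / 2) ≤ 1 := hexp
        _ = (Real.sqrt a)⁻¹ * (Real.sqrt (x - a))⁻¹ * (Real.sqrt a * Real.sqrt (x - a)) := by
            field_simp
  -- the constant-denominator integrand is integrable (continuous)
  have hlow_int : IntervalIntegrable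
      (fun y : ℝ => Real.exp (-c * y / 2) / Real.sqrt (a * (t - a))) volume a t := by
    apply Continuous.intervalIntegrable
    exact (Real.continuous_exp.comp (by fun_prop)).div_const _
  -- pointwise comparison a.e.
  have key : (∫ y in a..t, Real.exp (-c * y / 2) / Real.sqrt (a * (t - a))) ≤
      ∫ y in a..t, Real.exp (-c * y / 2) / Real.sqrt (a * (y - a)) := by
    apply intervalIntegral.integral_mono_ae_restrict hat.le hlow_int hf_int
    have hne : ∀ᵐ x ∂(volume.restrict (Set.Icc a t)), x ≠ a := by
      refine MeasureTheory.ae_iff.2 (le_antisymm ?_ zero_le)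
      have h0 : volume ({x : ℝ | ¬x ≠ a}) = 0 := by
        simp [Set.setOf_eq_eq_singleton]
      calc (volume.restrict (Set.Icc a t)) {x : ℝ | ¬x ≠ a}
          ≤ volume {x : ℝ | ¬x ≠ a} := Measure.restrict_le_self _
        _ = 0 := h0
    filter_upwards [ae_restrict_mem measurableSet_Icc, hne] with x hxm hxne
    have hxa : a < x := lt_of_le_of_ne hxm.1 (Ne.symm hxne)
    have h1 : 0 < a * (x - a) := mul_pos ha0 (by linarith)
    have h2 : a * (x - a) ≤ a * (t - a) := by nlinarith [hxm.2]
    apply div_le_div_of_nonneg_left (Real.exp_pos _).le (Real.sqrt_pos.2 h1)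
    exact Real.sqrt_le_sqrt h2
  -- compute the lower integral
  have hval : (∫ y in a..t, Real.exp (-c * y / 2)) =
      (2 / c) * (Real.exp (-c * a / 2) - Real.exp (-c * t / 2)) := by
    have hderiv : ∀ x ∈ Set.uIcc a t, HasDerivAt
        (fun y : ℝ => (-2 / c) * Real.exp (-c * y / 2)) (Real.exp (-c * x / 2)) x := by
      intro x _
      have h1 : HasDerivAt (fun y : ℝ => -c * y / 2) (-c / 2) x := by
        simpa using ((hasDerivAt_id x).const_mul (-c)).div_const 2
      have h2 := (h1.exp).const_mul (-2 / c)
      rw [show (-2 / c) * (Real.exp (-c * x / 2) * (-c / 2)) = Real.exp (-c * x / 2) * (c / c) by ring,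
        div_self hc0.ne', mul_one] at h2
      exact h2
    rw [intervalIntegral.integral_eq_sub_of_hasDerivAt hderiv
      (Continuous.intervalIntegrable (by fun_prop) a t)]
    field_simp
    ring
  -- put it together
  have hlowval : (∫ y in a..t, Real.exp (-c * y / 2) / Real.sqrt (a * (t - a))) =
      ((2 / c) * (Real.exp (-c * a / 2) - Real.exp (-c * t / 2))) / Real.sqrt (a * (t - a)) := by
    rw [intervalIntegral.integral_div, hval]
  have hmain : ((2 / c) * (Real.exp (-c * a / 2) - Real.exp (-c * t / 2))) / Real.sqrt (a * (t - a)) ≤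
      ∫ y in a..t, Real.exp (-c * y / 2) / Real.sqrt (a * (y - a)) := by
    rw [← hlowval]; exact key
  unfold lastZeroDensity
  rw [← hc]
  have hcoef : (0 : ℝ) < c / (2 * π) := by positivity
  have h3 : (c / (2 * π)) * (((2 / c) * (Real.exp (-c * a / 2) - Real.exp (-c * t / 2))) / Real.sqrt (a * (t - a)))
      ≤ (c / (2 * π)) * ∫ y in a..t, Real.exp (-c * y / 2) / Real.sqrt (a * (y - a)) :=
    mul_le_mul_of_nonneg_left hmain hcoef.le
  have heq : (c / (2 * π)) * (((2 / c) * (Real.exp (-c * a / 2) - Real.exp (-c * t / 2))) / Real.sqrt (a * (t - a)))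
      = (Real.exp (-c * a / 2) - Real.exp (-c * t / 2)) / (π * Real.sqrt (a * (t - a))) := by
    have hcc : c * (2 / c) = 2 := by field_simp
    calc (c / (2 * π)) * (((2 / c) * (Real.exp (-c * a / 2) - Real.exp (-c * t / 2))) / Real.sqrt (a * (t - a)))
        = (c * (2 / c)) * ((Real.exp (-c * a / 2) - Real.exp (-c * t / 2)) / (2 * π * Real.sqrt (a * (t - a)))) := by
          ring
      _ = 2 * ((Real.exp (-c * a / 2) - Real.exp (-c * t / 2)) / (2 * π * Real.sqrt (a * (t - a)))) := by
          rw [hcc]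
      _ = (Real.exp (-c * a / 2) - Real.exp (-c * t / 2)) / (π * Real.sqrt (a * (t - a))) := by
          ring
  have h4 : (0 : ℝ) ≤ Real.exp (-c * t / 2) / (π * Real.sqrt (a * (t - a))) := by positivity
  rw [heq] at h3
  linarith
end

section
/- Let μ ≠ 0, t > 0, and for b ∈ (0,t) and small ε > 0 let P_r = ∫_{b-ε}^{b+ε} f_{μ√r,t}(a) da where f is the density of the last zero crossing time. Then lim_{ε→0⁺} liminf_{r→∞} (1/r) log P_r ≥ -μ²b/2 and lim_{ε→0⁺} limsup_{r→∞} (1/r) log P_r ≤ -μ²b/2. -/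
open Real Filter MeasureTheory

set_option maxHeartbeats 1000000

open intervalIntegral

lemma expSqrtMeas (c : ℝ) : Measurable fun s : ℝ => Real.exp (-(c*s)) / Real.sqrt s := by
  fun_prop

lemma expSqrtInt {c : ℝ} (hc : 0 ≤ c) {u v : ℝ} (hu : 0 ≤ u) (hv : 0 ≤ v) :
    IntervalIntegrable (fun s => Real.exp (-(c*s)) / Real.sqrt s) volume u v := by
  apply IntervalIntegrable.mono_fun' (g := fun s : ℝ => s ^ (-(1/2) : ℝ))
      (intervalIntegrable_rpow' (by norm_num))
      (expSqrtMeas c).aestronglyMeasurable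
  filter_upwards [ae_restrict_mem measurableSet_uIoc] with s hs
  have hs0 : 0 < s := lt_of_le_of_lt (le_min hu hv) hs.1
  have h1 : Real.exp (-(c*s)) ≤ 1 := Real.exp_le_one_iff.2 (by nlinarith)
  have h2 : ‖Real.exp (-(c*s)) / Real.sqrt s‖ = Real.exp (-(c*s)) / Real.sqrt s := by
    rw [Real.norm_eq_abs, abs_of_nonneg]; positivity
  rw [h2, Real.rpow_neg hs0.le, ← Real.sqrt_eq_rpow, inv_eq_one_div]
  gcongr

noncomputable def Iexp (c u : ℝ) : ℝ := ∫ s in (0:ℝ)..u, Real.exp (-(c*s)) / Real.sqrt s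

lemma integral_rpow_half {u : ℝ} (hu : 0 ≤ u) :
    ∫ s in (0:ℝ)..u, s ^ (-(1/2) : ℝ) = 2 * Real.sqrt u := by
  rw [integral_rpow (Or.inl (by norm_num))]
  rw [Real.sqrt_eq_rpow]
  norm_num
  ring

lemma Iexp_le {c u : ℝ} (hc : 0 ≤ c) (hu : 0 ≤ u) : Iexp c u ≤ 2 * Real.sqrt u := by
  rw [← integral_rpow_half hu]
  apply integral_mono_on hu (expSqrtInt hc le_rfl hu) (intervalIntegrable_rpow' (by norm_num))
  intro s hs
  rcases eq_or_lt_of_le hs.1 with h | h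
  · simp [← h, Real.zero_rpow (show (-(1/2):ℝ) ≠ 0 by norm_num)]
  · have h1 : Real.exp (-(c*s)) ≤ 1 := Real.exp_le_one_iff.2 (by nlinarith)
    rw [Real.rpow_neg h.le, ← Real.sqrt_eq_rpow, inv_eq_one_div]
    gcongr

lemma le_Iexp {c u : ℝ} (hc : 0 ≤ c) (hu : 0 ≤ u) :
    Real.exp (-(c*u)) * (2 * Real.sqrt u) ≤ Iexp c u := by
  have : Real.exp (-(c*u)) * (2 * Real.sqrt u)
      = ∫ s in (0:ℝ)..u, Real.exp (-(c*u)) * s ^ (-(1/2) : ℝ) := by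
    rw [intervalIntegral.integral_const_mul, integral_rpow_half hu]
  rw [this]
  apply integral_mono_on hu
    ((intervalIntegrable_rpow' (by norm_num)).const_mul _) (expSqrtInt hc le_rfl hu)
  intro s hs
  rcases eq_or_lt_of_le hs.1 with h | h
  · simp [← h, Real.zero_rpow (show (-(1/2):ℝ) ≠ 0 by norm_num)]
  · have h1 : Real.exp (-(c*u)) ≤ Real.exp (-(c*s)) := by
      apply Real.exp_le_exp.2; nlinarith [hs.2]
    rw [Real.rpow_neg h.le, ← Real.sqrt_eq_rpow, inv_eq_one_div, mul_one_div]
    gcongr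

lemma Iexp_nonneg {c u : ℝ} (hu : 0 ≤ u) : 0 ≤ Iexp c u :=
  integral_nonneg hu fun s _ => by positivity

lemma Iexp_mono {c u v : ℝ} (hc : 0 ≤ c) (hu : 0 ≤ u) (huv : u ≤ v) :
    Iexp c u ≤ Iexp c v := by
  have hv : 0 ≤ v := hu.trans huv
  have := integral_add_adjacent_intervals (expSqrtInt hc le_rfl hu) (expSqrtInt hc hu hv)
  have h2 : 0 ≤ ∫ s in u..v, Real.exp (-(c*s)) / Real.sqrt s :=
    integral_nonneg huv fun s _ => by positivity
  unfold Iexp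
  rw [← this]
  linarith

lemma density_eq (ν t a : ℝ) (ha : 0 < a) :
    lastZeroDensity ν t a =
      Real.exp (-(ν^2/2*t)) / (π * Real.sqrt (a*(t-a))) +
      ν^2/2/π * (Real.exp (-(ν^2/2*a)) / Real.sqrt a * Iexp (ν^2/2) (t-a)) := by
  set c : ℝ := ν^2/2 with hc
  have key : (∫ y in a..t, Real.exp (-(ν^2) * y / 2) / Real.sqrt (a*(y-a)))
      = Real.exp (-(c*a)) / Real.sqrt a * Iexp c (t-a) := by
    have h1 : (fun y => Real.exp (-(ν^2) * y / 2) / Real.sqrt (a*(y-a)))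
        = fun y => (fun s => Real.exp (-(c*(s+a))) / Real.sqrt (a*s)) (y - a) := by
      funext y
      simp only []
      congr 2
      ring
    rw [h1, intervalIntegral.integral_comp_sub_right (fun s => Real.exp (-(c*(s+a))) / Real.sqrt (a*s)) a,
        sub_self]
    have h2 : (fun s => Real.exp (-(c*(s+a))) / Real.sqrt (a*s))
        = fun s => (Real.exp (-(c*a)) / Real.sqrt a) * (Real.exp (-(c*s)) / Real.sqrt s) := by
      funext s
      rw [Real.sqrt_mul ha.le, show -(c*(s+a)) = -(c*a) + -(c*s) by ring, Real.exp_add,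
        div_mul_div_comm]
    rw [h2, intervalIntegral.integral_const_mul, Iexp]
  unfold lastZeroDensity
  rw [key]
  have e1 : -(ν^2) * t / 2 = -(c*t) := by rw [hc]; ring
  have e2 : ν^2/(2*π) = c/π := by rw [hc]; ring
  rw [e1, e2]

lemma density_contOn {ν t l u : ℝ} (hl : 0 < l) (hu : u < t) (hlu : l ≤ u) (ht : 0 < t) :
    ContinuousOn (fun a => lastZeroDensity ν t a) (Set.Icc l u) := by
  set c : ℝ := ν^2/2 with hc
  have hc0 : 0 ≤ c := by positivity
  have hIntOn : IntegrableOn (fun s => Real.exp (-(c*s)) / Real.sqrt s) (Set.uIcc 0 t) volume := by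
    rw [Set.uIcc_of_le ht.le, integrableOn_Icc_iff_integrableOn_Ioc]
    exact (expSqrtInt hc0 le_rfl ht.le).1
  have hprim : ContinuousOn (fun x => ∫ s in (0:ℝ)..x, Real.exp (-(c*s)) / Real.sqrt s)
      (Set.uIcc 0 t) := intervalIntegral.continuousOn_primitive_interval hIntOn
  have hmap : Set.MapsTo (fun a : ℝ => t - a) (Set.Icc l u) (Set.uIcc 0 t) := by
    intro a ha
    rw [Set.uIcc_of_le ht.le]
    simp only [Set.mem_Icc]
    obtain ⟨h1, h2⟩ := ha
    constructor <;> [linarith; linarith]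
  have hIcont : ContinuousOn (fun a => Iexp c (t - a)) (Set.Icc l u) :=
    hprim.comp (Continuous.continuousOn (by continuity)) hmap
  have hN : ContinuousOn (fun a =>
      Real.exp (-(c*t)) / (π * Real.sqrt (a*(t-a))) +
      c/π * (Real.exp (-(c*a)) / Real.sqrt a * Iexp c (t-a))) (Set.Icc l u) := by
    apply ContinuousOn.add
    · apply ContinuousOn.div continuousOn_const
      · exact (continuous_const.mul ((continuous_id.mul (continuous_const.sub continuous_id)).sqrt)).continuousOn
      · intro a ha
        have h1 : 0 < a * (t - a) := mul_pos (hl.trans_le ha.1) (by linarith [ha.2])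
        positivity
    · apply continuousOn_const.mul
      apply ContinuousOn.mul _ hIcont
      apply ContinuousOn.div
      · exact (Real.continuous_exp.comp (by continuity)).continuousOn
      · exact Real.continuous_sqrt.continuousOn
      · intro a ha
        have : 0 < a := hl.trans_le ha.1
        positivity
  apply hN.congr
  intro a ha
  exact density_eq ν t a (hl.trans_le ha.1)

lemma tendsto_inv_log_mul {K : ℝ} (hK : 0 < K) :
    Tendsto (fun r : ℝ => (1/r) * Real.log (K*r)) atTop (nhds 0) := by
  have a1 : Tendsto (fun r : ℝ => Real.log K * r⁻¹ + Real.log r / r) atTop (nhds 0) := by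
    have t1 : Tendsto (fun r : ℝ => Real.log K * r⁻¹) atTop (nhds (0:ℝ)) := by
      simpa using tendsto_const_nhds.mul (tendsto_inv_atTop_zero (𝕜 := ℝ))
    have t2 : Tendsto (fun r : ℝ => Real.log r / r) atTop (nhds (0:ℝ)) := by
      have := Real.tendsto_pow_log_div_mul_add_atTop 1 0 1 one_ne_zero
      simpa using this
    simpa using t1.add t2
  apply a1.congr'
  filter_upwards [eventually_gt_atTop (0:ℝ)] with r hr
  rw [Real.log_mul hK.ne' hr.ne']
  field_simp

theorem stmt_9 (μ t b : ℝ) (hμ : μ ≠ 0) (ht : 0 < t) (hb : b ∈ Set.Ioo 0 t) :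
    ∀ δ > 0, ∃ ε₀ > 0, ∀ ε, 0 < ε → ε < ε₀ →
      -(μ ^ 2 * b / 2) - δ ≤
          liminf (fun r : ℝ =>
            (1 / r) * Real.log (∫ a in (b - ε)..(b + ε),
              lastZeroDensity (μ * Real.sqrt r) t a)) atTop ∧
      limsup (fun r : ℝ =>
          (1 / r) * Real.log (∫ a in (b - ε)..(b + ε),
            lastZeroDensity (μ * Real.sqrt r) t a)) atTop ≤
        -(μ ^ 2 * b / 2) + δ := by
  obtain ⟨hb0, hbt⟩ := hb
  have hμ2 : 0 < μ ^ 2 := by positivity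
  have hπ : 0 < π := Real.pi_pos
  intro δ hδ
  refine ⟨min b (min ((t-b)/2) (δ/μ^2)),
    lt_min hb0 (lt_min (by linarith) (div_pos hδ hμ2)), ?_⟩
  intro ε hε hε'
  have hεb : ε < b := hε'.trans_le (min_le_left _ _)
  have hε2 : ε < (t-b)/2 := hε'.trans_le ((min_le_right _ _).trans (min_le_left _ _))
  have hεδ : μ^2 * ε < δ := by
    have h := hε'.trans_le ((min_le_right _ _).trans (min_le_right _ _))
    rw [lt_div_iff₀ hμ2] at h
    linarith
  set l : ℝ := b - ε with hldef
  set u : ℝ := b + ε with hudef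
  have hl : 0 < l := by rw [hldef]; linarith
  have hu0 : 0 < u := by rw [hudef]; linarith
  have hlu : l ≤ u := by rw [hldef, hudef]; linarith
  have hut : u < t := by rw [hudef]; linarith
  have hεtu : ε ≤ t - u := by rw [hudef]; linarith
  have hlt : l ≤ t := by linarith
  have hsu : 0 < Real.sqrt u := Real.sqrt_pos.2 hu0
  have hsl : 0 < Real.sqrt l := Real.sqrt_pos.2 hl
  have hse : 0 < Real.sqrt ε := Real.sqrt_pos.2 hε
  have hsm : 0 < Real.sqrt (l*(t-u)) := Real.sqrt_pos.2 (mul_pos hl (by linarith))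
  set A : ℝ := μ^2*(b+2*ε)/2 with hAdef
  set B : ℝ := μ^2*(b-ε)/2 with hBdef
  set Kl : ℝ := 2*ε*Real.sqrt ε*μ^2/(π*Real.sqrt u) with hKldef
  set C1 : ℝ := 1/(π*Real.sqrt (l*(t-u))) with hC1def
  set C2 : ℝ := μ^2*Real.sqrt t/(π*Real.sqrt l) with hC2def
  set Ku : ℝ := 2*ε*(C1+C2) with hKudef
  have hKl : 0 < Kl := div_pos (by positivity) (by positivity)
  have hC1 : 0 < C1 := by positivity
  have hC2 : 0 < C2 := by positivity
  have hKu : 0 < Ku := by positivity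
  have hint : ∀ r : ℝ, IntervalIntegrable (fun a => lastZeroDensity (μ*Real.sqrt r) t a)
      volume l u := by
    intro r
    apply ContinuousOn.intervalIntegrable
    rw [Set.uIcc_of_le hlu]
    exact density_contOn hl hut hlu ht
  have key : ∀ r : ℝ, 1 ≤ r →
      Kl * r * Real.exp (-(A*r)) ≤ (∫ a in l..u, lastZeroDensity (μ*Real.sqrt r) t a) ∧
      (∫ a in l..u, lastZeroDensity (μ*Real.sqrt r) t a) ≤ Ku * r * Real.exp (-(B*r)) := by
    intro r hr
    have hr0 : (0:ℝ) < r := lt_of_lt_of_le one_pos hr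
    set c : ℝ := μ^2*r/2 with hcdef
    have hν2 : (μ*Real.sqrt r)^2/2 = c := by
      rw [mul_pow, Real.sq_sqrt hr0.le, hcdef]
    have hc0 : 0 ≤ c := by positivity
    have hlow : ∀ a ∈ Set.Icc l u,
        c/π * (Real.exp (-(c*u))/Real.sqrt u * (Real.exp (-(c*ε))*(2*Real.sqrt ε)))
          ≤ lastZeroDensity (μ*Real.sqrt r) t a := by
      intro a ha
      have ha0 : 0 < a := hl.trans_le ha.1
      rw [density_eq _ t a ha0, hν2]
      have t1 : 0 ≤ Real.exp (-(c*t)) / (π * Real.sqrt (a*(t-a))) := by positivity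
      have h2 : Real.exp (-(c*u))/Real.sqrt u ≤ Real.exp (-(c*a))/Real.sqrt a := by
        apply div_le_div₀ (Real.exp_nonneg _)
          (Real.exp_le_exp.2 (by nlinarith [ha.2])) (Real.sqrt_pos.2 ha0)
          (Real.sqrt_le_sqrt ha.2)
      have h3 : Real.exp (-(c*ε))*(2*Real.sqrt ε) ≤ Iexp c (t-a) :=
        (le_Iexp hc0 hε.le).trans (Iexp_mono hc0 hε.le (by linarith [ha.2]))
      have h4 : c/π * (Real.exp (-(c*u))/Real.sqrt u * (Real.exp (-(c*ε))*(2*Real.sqrt ε)))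
          ≤ c/π * (Real.exp (-(c*a))/Real.sqrt a * Iexp c (t-a)) := by
        apply mul_le_mul_of_nonneg_left _ (by positivity)
        exact mul_le_mul h2 h3 (by positivity) (by positivity)
      linarith
    have hup : ∀ a ∈ Set.Icc l u,
        lastZeroDensity (μ*Real.sqrt r) t a ≤ Real.exp (-(c*l)) * (C1 + C2*r) := by
      intro a ha
      have ha0 : 0 < a := hl.trans_le ha.1
      have hat : a < t := lt_of_le_of_lt ha.2 hut
      rw [density_eq _ t a ha0, hν2]
      have h1 : Real.exp (-(c*t)) / (π * Real.sqrt (a*(t-a)))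
          ≤ Real.exp (-(c*l)) * C1 := by
        rw [hC1def, mul_one_div]
        apply div_le_div₀ (Real.exp_nonneg _)
          (Real.exp_le_exp.2 (by nlinarith)) (by positivity)
        apply mul_le_mul_of_nonneg_left _ hπ.le
        apply Real.sqrt_le_sqrt
        apply mul_le_mul ha.1 (by linarith [ha.2]) (by linarith) ha0.le
      have h2 : c/π * (Real.exp (-(c*a))/Real.sqrt a * Iexp c (t-a))
          ≤ Real.exp (-(c*l)) * (C2*r) := by
        have e1 : Real.exp (-(c*a))/Real.sqrt a ≤ Real.exp (-(c*l))/Real.sqrt l :=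
          div_le_div₀ (Real.exp_nonneg _)
            (Real.exp_le_exp.2 (by nlinarith [ha.1])) hsl
            (Real.sqrt_le_sqrt ha.1)
        have e2 : Iexp c (t-a) ≤ 2*Real.sqrt t :=
          (Iexp_le hc0 (by linarith)).trans (by
            have := Real.sqrt_le_sqrt (show t - a ≤ t by linarith)
            linarith)
        have e3 : c/π * (Real.exp (-(c*a))/Real.sqrt a * Iexp c (t-a))
            ≤ c/π * (Real.exp (-(c*l))/Real.sqrt l * (2*Real.sqrt t)) := by
          apply mul_le_mul_of_nonneg_left _ (by positivity)
          exact mul_le_mul e1 e2 (Iexp_nonneg (by linarith)) (by positivity)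
        apply e3.trans_eq
        rw [hC2def, hcdef]
        field_simp
      linarith
    have hconst_int : ∀ C : ℝ, IntervalIntegrable (fun _ : ℝ => C) volume l u :=
      fun C => intervalIntegrable_const
    constructor
    · have step : (∫ a in l..u, (c/π * (Real.exp (-(c*u))/Real.sqrt u *
          (Real.exp (-(c*ε))*(2*Real.sqrt ε)))) )
          ≤ ∫ a in l..u, lastZeroDensity (μ*Real.sqrt r) t a :=
        intervalIntegral.integral_mono_on hlu (hconst_int _) (hint r) hlow
      rw [intervalIntegral.integral_const, smul_eq_mul] at step
      apply le_trans _ step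
      have eA : Real.exp (-(A*r)) = Real.exp (-(c*u)) * Real.exp (-(c*ε)) := by
        rw [← Real.exp_add]
        congr 1
        rw [hAdef, hcdef, hudef]
        ring
      have eul : u - l = 2*ε := by rw [hudef, hldef]; ring
      rw [eA, eul, hKldef, hcdef]
      apply le_of_eq
      field_simp
    · have step : (∫ a in l..u, lastZeroDensity (μ*Real.sqrt r) t a)
          ≤ ∫ a in l..u, (Real.exp (-(c*l)) * (C1 + C2*r)) :=
        intervalIntegral.integral_mono_on hlu (hint r) (hconst_int _) hup
      rw [intervalIntegral.integral_const, smul_eq_mul] at step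
      apply step.trans
      have eB : Real.exp (-(c*l)) = Real.exp (-(B*r)) := by
        congr 1
        rw [hBdef, hcdef, hldef]
        ring
      have eul : u - l = 2*ε := by rw [hudef, hldef]; ring
      rw [eB, eul, hKudef]
      have hexp : 0 ≤ Real.exp (-(B*r)) := Real.exp_nonneg _
      nlinarith [mul_nonneg (mul_nonneg hε.le hexp) (mul_nonneg hC1.le (sub_nonneg.2 hr))]
  have hPpos : ∀ r : ℝ, 1 ≤ r →
      0 < ∫ a in l..u, lastZeroDensity (μ*Real.sqrt r) t a := by
    intro r hr
    have hr0 : (0:ℝ) < r := lt_of_lt_of_le one_pos hr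
    exact lt_of_lt_of_le (by positivity) (key r hr).1
  have hflow : ∀ r : ℝ, 1 ≤ r →
      (1/r)*Real.log (Kl*r) - A
        ≤ (1/r)*Real.log (∫ a in l..u, lastZeroDensity (μ*Real.sqrt r) t a) := by
    intro r hr
    have hr0 : (0:ℝ) < r := lt_of_lt_of_le one_pos hr
    have h1 : Real.log (Kl*r*Real.exp (-(A*r)))
        ≤ Real.log (∫ a in l..u, lastZeroDensity (μ*Real.sqrt r) t a) :=
      Real.log_le_log (by positivity) (key r hr).1
    rw [Real.log_mul (by positivity) (Real.exp_ne_zero _), Real.log_exp] at h1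
    have h2 := mul_le_mul_of_nonneg_left h1 (by positivity : (0:ℝ) ≤ 1/r)
    have h3 : (1/r)*(Real.log (Kl*r) + -(A*r)) = (1/r)*Real.log (Kl*r) - A := by
      field_simp
      ring
    linarith
  have hfup : ∀ r : ℝ, 1 ≤ r →
      (1/r)*Real.log (∫ a in l..u, lastZeroDensity (μ*Real.sqrt r) t a)
        ≤ (1/r)*Real.log (Ku*r) - B := by
    intro r hr
    have hr0 : (0:ℝ) < r := lt_of_lt_of_le one_pos hr
    have h1 : Real.log (∫ a in l..u, lastZeroDensity (μ*Real.sqrt r) t a)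
        ≤ Real.log (Ku*r*Real.exp (-(B*r))) :=
      Real.log_le_log (hPpos r hr) (key r hr).2
    rw [Real.log_mul (by positivity) (Real.exp_ne_zero _), Real.log_exp] at h1
    have h2 := mul_le_mul_of_nonneg_left h1 (by positivity : (0:ℝ) ≤ 1/r)
    have h3 : (1/r)*(Real.log (Ku*r) + -(B*r)) = (1/r)*Real.log (Ku*r) - B := by
      field_simp
      ring
    linarith
  set f : ℝ → ℝ := fun r =>
    (1/r) * Real.log (∫ a in l..u, lastZeroDensity (μ*Real.sqrt r) t a) with hfdef
  set gl : ℝ → ℝ := fun r => (1/r)*Real.log (Kl*r) - A with hgldef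
  set gu : ℝ → ℝ := fun r => (1/r)*Real.log (Ku*r) - B with hgudef
  have hgl : Tendsto gl atTop (nhds (-A)) := by
    rw [hgldef]
    simpa using (tendsto_inv_log_mul hKl).sub_const A
  have hgu : Tendsto gu atTop (nhds (-B)) := by
    rw [hgudef]
    simpa using (tendsto_inv_log_mul hKu).sub_const B
  have hev_low : ∀ᶠ r in atTop, gl r ≤ f r := by
    filter_upwards [eventually_ge_atTop (1:ℝ)] with r hr
    exact hflow r hr
  have hev_up : ∀ᶠ r in atTop, f r ≤ gu r := by
    filter_upwards [eventually_ge_atTop (1:ℝ)] with r hr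
    exact hfup r hr
  have hf_bdd_below : IsBoundedUnder (· ≥ ·) atTop f := by
    refine ⟨-A-1, ?_⟩
    rw [eventually_map]
    filter_upwards [hev_low, hgl.eventually (eventually_gt_nhds (show -A-1 < -A by linarith))]
      with r h1 h2
    exact le_trans (le_of_lt h2) h1
  have hf_bdd_above : IsBoundedUnder (· ≤ ·) atTop f := by
    refine ⟨-B+1, ?_⟩
    rw [eventually_map]
    filter_upwards [hev_up, hgu.eventually (eventually_lt_nhds (show -B < -B+1 by linarith))]
      with r h1 h2
    exact le_trans h1 (le_of_lt h2)
  constructor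
  · have step1 : liminf gl atTop ≤ liminf f atTop :=
      liminf_le_liminf hev_low hgl.isBoundedUnder_ge hf_bdd_above.isCoboundedUnder_ge
    rw [hgl.liminf_eq] at step1
    refine le_trans ?_ step1
    rw [hAdef]
    linarith
  · have step1 : limsup f atTop ≤ limsup gu atTop :=
      limsup_le_limsup hev_up hf_bdd_below.isCoboundedUnder_le hgu.isBoundedUnder_le
    rw [hgu.limsup_eq] at step1
    refine step1.trans ?_
    rw [hBdef]
    linarith
end

section
/- Let μ ≠ 0, t > 0. With f_{μ,t} the density of the last zero crossing time, for all small ε > 0: liminf_{r→∞} (1/r) log ∫_{t-ε}^{t} f_{μ√r,t}(a) da ≥ -μ²t/2, and lim_{ε→0⁺} limsup_{r→∞} (1/r) log ∫_{t-ε}^{t} f_{μ√r,t}(a) da ≤ -μ²t/2. -/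
open Real Filter MeasureTheory

open intervalIntegral

lemma lzd_bounds (m t ε : ℝ) (ht : 0 < t) (hε : 0 < ε) (hεt : ε < t) :
    Real.exp (-(m ^ 2) * t / 2) * (ε / (π * t)) ≤
      (∫ a in (t - ε)..t, lastZeroDensity m t a) ∧
    (∫ a in (t - ε)..t, lastZeroDensity m t a) ≤
      Real.exp (-(m ^ 2) * (t - ε) / 2) *
        ((2 * Real.sqrt ε + (2/3) * m ^ 2 * ε * Real.sqrt ε) / (π * Real.sqrt (t - ε))) := by
  set s := t - ε with hs_def
  have hs : 0 < s := by simp [hs_def]; linarith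
  have hst : s < t := by simp [hs_def]; linarith
  -- measurability of the density
  set k : ℝ → ℝ → ℝ := fun a y => Real.exp (-(m ^ 2) * y / 2) / Real.sqrt (a * (y - a)) with hk
  set G : ℝ → ℝ := fun a => ∫ y, (Set.Ioc a t).indicator (k a) y with hG
  have hGmeas : Measurable G := by
    have h1 : StronglyMeasurable (fun p : ℝ × ℝ => (Set.Ioc p.1 t).indicator (k p.1) p.2) := by
      have : (fun p : ℝ × ℝ => (Set.Ioc p.1 t).indicator (k p.1) p.2)
          = fun p => if p.1 < p.2 ∧ p.2 ≤ t then k p.1 p.2 else 0 := by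
        ext p; rw [Set.indicator_apply]; simp [Set.mem_Ioc]
      rw [this]
      refine Measurable.stronglyMeasurable ?_
      refine Measurable.ite ?_ ?_ measurable_const
      · exact (measurableSet_lt measurable_fst measurable_snd).inter
          (measurable_snd measurableSet_Iic)
      · fun_prop

    exact h1.integral_prod_right'.measurable
  have f_eq : ∀ a ∈ Set.Ioo s t, lastZeroDensity m t a =
      Real.exp (-(m ^ 2) * t / 2) / (π * Real.sqrt (a * (t - a))) + (m ^ 2 / (2 * π)) * G a := by
    intro a ha
    unfold lastZeroDensity
    rw [intervalIntegral.integral_of_le ha.2.le, ← MeasureTheory.integral_indicator measurableSet_Ioc]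
  have hf_meas : AEStronglyMeasurable (fun a => lastZeroDensity m t a)
      (volume.restrict (Set.Ioo s t)) := by
    have h2 : AEStronglyMeasurable (fun a =>
        Real.exp (-(m ^ 2) * t / 2) / (π * Real.sqrt (a * (t - a))) + (m ^ 2 / (2 * π)) * G a)
        (volume.restrict (Set.Ioo s t)) := by
      refine Measurable.aestronglyMeasurable ?_
      exact (measurable_const.div ((measurable_const.mul
        ((measurable_id.mul (measurable_const.sub measurable_id)).sqrt)))).add
        (measurable_const.mul hGmeas)
    refine h2.congr ?_
    filter_upwards [ae_restrict_mem measurableSet_Ioo] with a ha using (f_eq a ha).symm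
  -- pointwise lower bound on Ioo
  have f_nonneg₂ : ∀ a, a ≤ t → 0 ≤ (m ^ 2 / (2 * π)) * ∫ y in a..t, k a y := by
    intro a hat
    exact mul_nonneg (div_nonneg (sq_nonneg m) (by positivity))
      (intervalIntegral.integral_nonneg hat
        (fun y _ => div_nonneg (Real.exp_nonneg _) (Real.sqrt_nonneg _)))
  have f_lb : ∀ a ∈ Set.Ioo s t,
      Real.exp (-(m ^ 2) * t / 2) * (1 / (π * t)) ≤ lastZeroDensity m t a := by
    intro a ha
    have h0a : 0 < a := hs.trans ha.1
    have hta : 0 < t - a := sub_pos.2 ha.2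
    have hsq_pos : 0 < Real.sqrt (a * (t - a)) := Real.sqrt_pos.2 (by positivity)
    have hsq_le : Real.sqrt (a * (t - a)) ≤ t :=
      (Real.sqrt_le_sqrt (by nlinarith [ha.1.le, ha.2.le] : a * (t - a) ≤ t ^ 2)).trans_eq
        (Real.sqrt_sq ht.le)
    have h1 : Real.exp (-(m ^ 2) * t / 2) * (1 / (π * t)) ≤
        Real.exp (-(m ^ 2) * t / 2) / (π * Real.sqrt (a * (t - a))) := by
      rw [mul_one_div]
      exact div_le_div₀ (Real.exp_nonneg _) le_rfl (by positivity)
        (by nlinarith [Real.pi_pos])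
    have h2 := f_nonneg₂ a ha.2.le
    unfold lastZeroDensity
    rw [hk] at h2
    linarith
  -- pointwise upper bound on Ioo
  set C : ℝ := Real.exp (-(m ^ 2) * s / 2) / Real.sqrt s with hC
  have hC_pos : 0 < C := by rw [hC]; positivity
  set g : ℝ → ℝ := fun a =>
    C * ((1 / π) * (t - a) ^ (-(1/2) : ℝ) + (m ^ 2 / π) * Real.sqrt (t - a)) with hg2
  have f_ub : ∀ a ∈ Set.Ioo s t, lastZeroDensity m t a ≤ g a := by
    intro a ha
    have h0a : 0 < a := hs.trans ha.1
    have hta : 0 < t - a := sub_pos.2 ha.2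
    have hat : a ≤ t := ha.2.le
    have hexp_le : Real.exp (-(m ^ 2) * t / 2) ≤ Real.exp (-(m ^ 2) * s / 2) :=
      Real.exp_le_exp.2 (by nlinarith [sq_nonneg m, hst.le])
    -- inner integral bound
    have hinner : (∫ y in a..t, k a y) ≤ C * (2 * Real.sqrt (t - a)) := by
      have hcalc : (∫ y in a..t, C * (y - a) ^ (-(1/2) : ℝ)) = C * (2 * Real.sqrt (t - a)) := by
        rw [intervalIntegral.integral_const_mul]
        congr 1
        rw [intervalIntegral.integral_comp_sub_right (fun x => x ^ (-(1/2) : ℝ)) a]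
        rw [integral_rpow (Or.inl (by norm_num))]
        rw [sub_self, Real.zero_rpow (by norm_num)]
        rw [show (-(1/2) : ℝ) + 1 = 1/2 by norm_num, ← Real.sqrt_eq_rpow]
        ring
      rw [← hcalc, intervalIntegral.integral_of_le hat, intervalIntegral.integral_of_le hat]
      apply MeasureTheory.integral_mono_of_nonneg
      · exact Filter.Eventually.of_forall fun y =>
          div_nonneg (Real.exp_nonneg _) (Real.sqrt_nonneg _)
      · have h3 : IntervalIntegrable (fun y => (y - a) ^ (-(1/2) : ℝ)) volume a t := by
          have := (intervalIntegrable_rpow' (a := 0) (b := t - a)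
            (r := -(1/2)) (by norm_num)).comp_sub_right a
          simpa using this
        exact (h3.const_mul C).1
      · filter_upwards [ae_restrict_mem measurableSet_Ioc] with y hy
        have hya : 0 < y - a := sub_pos.2 hy.1
        have hys : s ≤ y := (ha.1.trans hy.1).le
        rw [hk]; dsimp only
        rw [Real.sqrt_mul h0a.le, hC, Real.rpow_neg hya.le, ← Real.sqrt_eq_rpow]
        rw [show Real.exp (-(m ^ 2) * s / 2) / Real.sqrt s * (Real.sqrt (y - a))⁻¹
            = Real.exp (-(m ^ 2) * s / 2) / (Real.sqrt s * Real.sqrt (y - a)) by ring]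
        exact div_le_div₀ (Real.exp_nonneg _)
          (Real.exp_le_exp.2 (by nlinarith [sq_nonneg m]))
          (mul_pos (Real.sqrt_pos.2 hs) (Real.sqrt_pos.2 hya))
          (mul_le_mul_of_nonneg_right (Real.sqrt_le_sqrt ha.1.le) (Real.sqrt_nonneg _))
    -- first term bound
    have hterm1 : Real.exp (-(m ^ 2) * t / 2) / (π * Real.sqrt (a * (t - a))) ≤
        C * ((1 / π) * (t - a) ^ (-(1/2) : ℝ)) := by
      rw [Real.sqrt_mul h0a.le, hC, Real.rpow_neg hta.le, ← Real.sqrt_eq_rpow]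
      rw [show Real.exp (-(m ^ 2) * s / 2) / Real.sqrt s * (1 / π * (Real.sqrt (t - a))⁻¹)
          = Real.exp (-(m ^ 2) * s / 2) / (π * (Real.sqrt s * Real.sqrt (t - a))) by ring]
      have hss : Real.sqrt s * Real.sqrt (t - a) ≤ Real.sqrt a * Real.sqrt (t - a) :=
        mul_le_mul_of_nonneg_right (Real.sqrt_le_sqrt ha.1.le) (Real.sqrt_nonneg _)
      exact div_le_div₀ (Real.exp_nonneg _) hexp_le
        (mul_pos Real.pi_pos (mul_pos (Real.sqrt_pos.2 hs) (Real.sqrt_pos.2 hta)))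
        (mul_le_mul_of_nonneg_left hss Real.pi_pos.le)
    have hterm2 : (m ^ 2 / (2 * π)) * (∫ y in a..t, k a y) ≤
        C * ((m ^ 2 / π) * Real.sqrt (t - a)) := by
      calc (m ^ 2 / (2 * π)) * (∫ y in a..t, k a y)
          ≤ (m ^ 2 / (2 * π)) * (C * (2 * Real.sqrt (t - a))) :=
            mul_le_mul_of_nonneg_left hinner (by positivity)
        _ = C * ((m ^ 2 / π) * Real.sqrt (t - a)) := by ring
    have : lastZeroDensity m t a =
        Real.exp (-(m ^ 2) * t / 2) / (π * Real.sqrt (a * (t - a))) +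
          (m ^ 2 / (2 * π)) * (∫ y in a..t, k a y) := rfl
    rw [this]
    calc Real.exp (-(m ^ 2) * t / 2) / (π * Real.sqrt (a * (t - a))) +
          (m ^ 2 / (2 * π)) * (∫ y in a..t, k a y)
        ≤ C * ((1 / π) * (t - a) ^ (-(1/2) : ℝ)) + C * ((m ^ 2 / π) * Real.sqrt (t - a)) :=
          add_le_add hterm1 hterm2
      _ = g a := by rw [hg2]; ring
  -- integrability
  have h1 : IntervalIntegrable (fun a => (t - a) ^ (-(1/2) : ℝ)) volume s t := by
    have h := ((intervalIntegrable_rpow' (a := 0) (b := ε)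
      (r := -(1/2)) (by norm_num)).comp_sub_left t).symm
    simpa [hs_def] using h
  have h2 : IntervalIntegrable (fun a => Real.sqrt (t - a)) volume s t :=
    Continuous.intervalIntegrable (Real.continuous_sqrt.comp (continuous_const.sub continuous_id)) _ _
  have hg_ii : IntervalIntegrable g volume s t := by
    have h := ((h1.const_mul (1/π)).add (h2.const_mul (m ^ 2/π))).const_mul C
    exact h
  have hg_int : IntegrableOn g (Set.Ioo s t) volume :=
    (hg_ii.1).mono_set Set.Ioo_subset_Ioc_self
  have hf_int : IntegrableOn (fun a => lastZeroDensity m t a) (Set.Ioo s t) volume := by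
    refine hg_int.mono' hf_meas ?_
    filter_upwards [ae_restrict_mem measurableSet_Ioo] with a ha
    have h0 : (0:ℝ) ≤ lastZeroDensity m t a := le_trans (by positivity) (f_lb a ha)
    rw [Real.norm_eq_abs, abs_of_nonneg h0]
    exact f_ub a ha
  have hIoo_eq : (∫ a in s..t, lastZeroDensity m t a)
      = ∫ a in Set.Ioo s t, lastZeroDensity m t a := by
    rw [intervalIntegral.integral_of_le hst.le, MeasureTheory.integral_Ioc_eq_integral_Ioo]
  have hts : t - s = ε := by rw [hs_def]; ring
  constructor
  · -- lower bound
    have hconst_int : IntegrableOn (fun _ : ℝ => Real.exp (-(m ^ 2) * t / 2) * (1/(π*t)))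
        (Set.Ioo s t) volume := integrableOn_const measure_Ioo_lt_top.ne
    have hmono := setIntegral_mono_on hconst_int hf_int measurableSet_Ioo f_lb
    rw [MeasureTheory.setIntegral_const, measureReal_def, Real.volume_Ioo, hts,
      ENNReal.toReal_ofReal hε.le, smul_eq_mul] at hmono
    rw [hIoo_eq]
    refine le_trans (le_of_eq (by ring)) hmono
  · -- upper bound
    have hint1 : (∫ a in s..t, (t - a) ^ (-(1/2):ℝ)) = 2 * Real.sqrt ε := by
      rw [intervalIntegral.integral_comp_sub_left (fun x => x ^ (-(1/2):ℝ)) t]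
      rw [show t - t = 0 by ring, hts]
      rw [integral_rpow (Or.inl (by norm_num))]
      rw [Real.zero_rpow (by norm_num), show (-(1/2):ℝ) + 1 = 1/2 by norm_num,
        ← Real.sqrt_eq_rpow]
      ring
    have hint2 : (∫ a in s..t, Real.sqrt (t - a)) = (2/3) * (ε * Real.sqrt ε) := by
      rw [intervalIntegral.integral_comp_sub_left Real.sqrt t]
      rw [show t - t = 0 by ring, hts]
      simp only [Real.sqrt_eq_rpow]
      rw [integral_rpow (Or.inl (by norm_num))]
      rw [Real.zero_rpow (by norm_num), show (1:ℝ)/2 + 1 = 3/2 by norm_num]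
      rw [show (ε:ℝ) ^ ((3:ℝ)/2) = ε * ε ^ ((1:ℝ)/2) by
        rw [show (3:ℝ)/2 = 1 + 1/2 by norm_num, Real.rpow_add hε, Real.rpow_one]]
      ring
    have hg_val : (∫ a in s..t, g a)
        = C * ((1/π) * (2 * Real.sqrt ε) + (m ^ 2/π) * ((2/3) * (ε * Real.sqrt ε))) := by
      rw [hg2]
      rw [intervalIntegral.integral_const_mul]
      rw [intervalIntegral.integral_add (h1.const_mul _) (h2.const_mul _)]
      rw [intervalIntegral.integral_const_mul, intervalIntegral.integral_const_mul,
        hint1, hint2]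
    calc (∫ a in s..t, lastZeroDensity m t a)
        = ∫ a in Set.Ioo s t, lastZeroDensity m t a := hIoo_eq
      _ ≤ ∫ a in Set.Ioo s t, g a := setIntegral_mono_on hf_int hg_int measurableSet_Ioo f_ub
      _ = ∫ a in s..t, g a := by
          rw [intervalIntegral.integral_of_le hst.le,
            MeasureTheory.integral_Ioc_eq_integral_Ioo]
      _ = C * ((1/π) * (2 * Real.sqrt ε) + (m ^ 2/π) * ((2/3) * (ε * Real.sqrt ε))) := hg_val
      _ = Real.exp (-(m ^ 2) * s / 2) *
            ((2 * Real.sqrt ε + (2/3) * m ^ 2 * ε * Real.sqrt ε) / (π * Real.sqrt s)) := by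
          rw [hC]; ring

lemma key_est (μ t ε : ℝ) (hμ : μ ≠ 0) (ht : 0 < t) (hε : 0 < ε) (hεt : ε < t)
    (r : ℝ) (hr : 1 ≤ r) :
    (-(μ ^ 2 * t / 2) + Real.log (ε / (π * t)) / r ≤
      (1 / r) * Real.log (∫ a in (t - ε)..t, lastZeroDensity (μ * Real.sqrt r) t a)) ∧
    ((1 / r) * Real.log (∫ a in (t - ε)..t, lastZeroDensity (μ * Real.sqrt r) t a) ≤
      -(μ ^ 2 * (t - ε) / 2) + (2 * Real.sqrt ε / (π * Real.sqrt (t - ε))) / r +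
        (2/3) * μ ^ 2 * ε * Real.sqrt ε / (π * Real.sqrt (t - ε))) := by
  have hr0 : 0 < r := lt_of_lt_of_le one_pos hr
  have hm : (μ * Real.sqrt r) ^ 2 = μ ^ 2 * r := by rw [mul_pow, Real.sq_sqrt hr0.le]
  obtain ⟨hlow, hup⟩ := lzd_bounds (μ * Real.sqrt r) t ε ht hε hεt
  rw [hm] at hlow hup
  set I : ℝ := ∫ a in (t - ε)..t, lastZeroDensity (μ * Real.sqrt r) t a with hI
  have hpos : 0 < Real.exp (-(μ ^ 2 * r) * t / 2) * (ε / (π * t)) := by positivity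
  have hIpos : 0 < I := lt_of_lt_of_le hpos hlow
  have hsε : 0 < Real.sqrt ε := Real.sqrt_pos.2 hε
  have hss : 0 < Real.sqrt (t - ε) := Real.sqrt_pos.2 (by linarith)
  constructor
  · have hlog : -(μ ^ 2 * r) * t / 2 + Real.log (ε / (π * t)) ≤ Real.log I := by
      have h := Real.log_le_log hpos hlow
      rwa [Real.log_mul (Real.exp_ne_zero _) (by positivity), Real.log_exp] at h
    calc -(μ ^ 2 * t / 2) + Real.log (ε / (π * t)) / r
        = (1 / r) * (-(μ ^ 2 * r) * t / 2 + Real.log (ε / (π * t))) := by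
          field_simp
      _ ≤ (1 / r) * Real.log I := mul_le_mul_of_nonneg_left hlog (by positivity)
  · set K : ℝ := (2 * Real.sqrt ε + (2/3) * (μ ^ 2 * r) * ε * Real.sqrt ε) /
      (π * Real.sqrt (t - ε)) with hK
    have hKpos : 0 < K := by
      apply div_pos
      · have : 0 < (2/3) * (μ ^ 2 * r) * ε * Real.sqrt ε := by positivity
        linarith
      · exact mul_pos Real.pi_pos hss
    have hlog : Real.log I ≤ -(μ ^ 2 * r) * (t - ε) / 2 + K := by
      have h := Real.log_le_log hIpos hup
      rw [Real.log_mul (Real.exp_ne_zero _) hKpos.ne', Real.log_exp] at h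
      have h2 : Real.log K ≤ K := (Real.log_le_sub_one_of_pos hKpos).trans (by linarith)
      linarith
    calc (1 / r) * Real.log I
        ≤ (1 / r) * (-(μ ^ 2 * r) * (t - ε) / 2 + K) :=
          mul_le_mul_of_nonneg_left hlog (by positivity)
      _ = -(μ ^ 2 * (t - ε) / 2) + (2 * Real.sqrt ε / (π * Real.sqrt (t - ε))) / r +
          (2/3) * μ ^ 2 * ε * Real.sqrt ε / (π * Real.sqrt (t - ε)) := by
          rw [hK]; field_simp; ring

theorem stmt_10 (μ t : ℝ) (hμ : μ ≠ 0) (ht : 0 < t) :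
    (∀ ε, 0 < ε → ε < t →
      -(μ ^ 2 * t / 2) ≤
        liminf (fun r : ℝ =>
          (1 / r) * Real.log (∫ a in (t - ε)..t,
            lastZeroDensity (μ * Real.sqrt r) t a)) atTop) ∧
    (∀ δ > 0, ∃ ε₀ > 0, ∀ ε, 0 < ε → ε < ε₀ →
      limsup (fun r : ℝ =>
          (1 / r) * Real.log (∫ a in (t - ε)..t,
            lastZeroDensity (μ * Real.sqrt r) t a)) atTop ≤
        -(μ ^ 2 * t / 2) + δ) := by
  have hμ2 : (0:ℝ) < μ ^ 2 := by positivity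
  constructor
  · intro ε hε hεt
    set v : ℝ → ℝ := fun r =>
      (1 / r) * Real.log (∫ a in (t - ε)..t, lastZeroDensity (μ * Real.sqrt r) t a) with hv
    set L := Real.log (ε / (π * t)) with hL
    set A := 2 * Real.sqrt ε / (π * Real.sqrt (t - ε)) with hA
    set B := (2/3) * μ ^ 2 * ε * Real.sqrt ε / (π * Real.sqrt (t - ε)) with hB
    have hlowev : ∀ᶠ r in atTop, -(μ ^ 2 * t / 2) + L / r ≤ v r :=
      eventually_atTop.2 ⟨1, fun r hr => (key_est μ t ε hμ ht hε hεt r hr).1⟩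
    have hupev : ∀ᶠ r in atTop, v r ≤ -(μ ^ 2 * (t - ε) / 2) + A + B := by
      filter_upwards [eventually_ge_atTop (1:ℝ)] with r hr
      refine ((key_est μ t ε hμ ht hε hεt r hr).2).trans ?_
      have hA0 : 0 ≤ A := by rw [hA]; positivity
      have hAr : A / r ≤ A := by
        rw [div_le_iff₀ (by linarith : (0:ℝ) < r)]
        nlinarith
      linarith
    have htend : Tendsto (fun r : ℝ => -(μ ^ 2 * t / 2) + L / r) atTop
        (nhds (-(μ ^ 2 * t / 2))) := by
      have h := (tendsto_const_nhds (x := L) (f := atTop)).div_atTop tendsto_id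
      simpa using (tendsto_const_nhds (x := -(μ ^ 2 * t / 2))).add h
    calc -(μ ^ 2 * t / 2)
        = liminf (fun r : ℝ => -(μ ^ 2 * t / 2) + L / r) atTop := htend.liminf_eq.symm
      _ ≤ liminf v atTop := liminf_le_liminf hlowev htend.isBoundedUnder_ge
          (isCoboundedUnder_ge_of_eventually_le _ hupev)
  · intro δ hδ
    set C₂ := 2 * μ ^ 2 / (3 * π * Real.sqrt (t / 2)) with hC2
    have hC2_0 : 0 ≤ C₂ := by rw [hC2]; positivity
    have hD : 0 < μ ^ 2 / 2 + C₂ + 1 := by linarith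
    refine ⟨min (t / 2) (min 1 (δ / (μ ^ 2 / 2 + C₂ + 1))),
      lt_min (by linarith) (lt_min one_pos (div_pos hδ hD)), ?_⟩
    intro ε hε hε0
    have hεt2 : ε < t / 2 := lt_of_lt_of_le hε0 (min_le_left _ _)
    have hε1 : ε < 1 := lt_of_lt_of_le hε0 ((min_le_right _ _).trans (min_le_left _ _))
    have hεδ : ε < δ / (μ ^ 2 / 2 + C₂ + 1) :=
      lt_of_lt_of_le hε0 ((min_le_right _ _).trans (min_le_right _ _))
    have hεt : ε < t := by linarith
    set v : ℝ → ℝ := fun r =>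
      (1 / r) * Real.log (∫ a in (t - ε)..t, lastZeroDensity (μ * Real.sqrt r) t a) with hv
    set L := Real.log (ε / (π * t)) with hL
    set A := 2 * Real.sqrt ε / (π * Real.sqrt (t - ε)) with hA
    set B := (2/3) * μ ^ 2 * ε * Real.sqrt ε / (π * Real.sqrt (t - ε)) with hB
    have hupev : ∀ᶠ r in atTop, v r ≤ -(μ ^ 2 * (t - ε) / 2) + A / r + B :=
      eventually_atTop.2 ⟨1, fun r hr => (key_est μ t ε hμ ht hε hεt r hr).2⟩
    have hlowev : ∀ᶠ r in atTop, -(μ ^ 2 * t / 2) - |L| ≤ v r := by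
      filter_upwards [eventually_ge_atTop (1:ℝ)] with r hr
      refine le_trans ?_ ((key_est μ t ε hμ ht hε hεt r hr).1)
      have h : -|L| ≤ L / r := by
        rw [le_div_iff₀ (by linarith : (0:ℝ) < r)]
        nlinarith [neg_abs_le L, abs_nonneg L]
      linarith
    have htend : Tendsto (fun r : ℝ => -(μ ^ 2 * (t - ε) / 2) + A / r + B) atTop
        (nhds (-(μ ^ 2 * (t - ε) / 2) + B)) := by
      have h := (tendsto_const_nhds (x := A) (f := atTop)).div_atTop tendsto_id
      have h2 := ((tendsto_const_nhds (x := -(μ ^ 2 * (t - ε) / 2))).add h).add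
        (tendsto_const_nhds (x := B))
      simpa using h2
    have h1 : limsup v atTop ≤ -(μ ^ 2 * (t - ε) / 2) + B := by
      calc limsup v atTop
          ≤ limsup (fun r : ℝ => -(μ ^ 2 * (t - ε) / 2) + A / r + B) atTop :=
            limsup_le_limsup hupev (isCoboundedUnder_le_of_eventually_le _ hlowev)
              htend.isBoundedUnder_le
        _ = -(μ ^ 2 * (t - ε) / 2) + B := htend.limsup_eq
    refine h1.trans ?_
    have hs2 : Real.sqrt (t / 2) ≤ Real.sqrt (t - ε) := Real.sqrt_le_sqrt (by linarith)
    have hs20 : 0 < Real.sqrt (t / 2) := Real.sqrt_pos.2 (by linarith)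
    have hsε1 : Real.sqrt ε ≤ 1 := Real.sqrt_le_one.mpr hε1.le
    have hB_le : B ≤ C₂ * ε := by
      rw [hB, hC2]
      calc (2/3) * μ ^ 2 * ε * Real.sqrt ε / (π * Real.sqrt (t - ε))
          ≤ (2/3) * μ ^ 2 * ε * 1 / (π * Real.sqrt (t / 2)) :=
            div_le_div₀ (by positivity)
              (by nlinarith [mul_le_mul_of_nonneg_left hsε1 (show (0:ℝ) ≤ 2/3 * μ ^ 2 * ε by positivity)])
              (mul_pos Real.pi_pos hs20)
              (mul_le_mul_of_nonneg_left hs2 Real.pi_pos.le)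
        _ = 2 * μ ^ 2 / (3 * π * Real.sqrt (t / 2)) * ε := by
            field_simp
    have hfin : (μ ^ 2 / 2 + C₂ + 1) * ε ≤ δ := by
      have h := (lt_div_iff₀ hD).1 hεδ
      nlinarith
    nlinarith [hB_le, hfin, hε.le, hC2_0]
end

section
/- For μ ≠ 0 and t > 0, with E[T_{μ,t}²] = (3/4)∫₀^t a·e^{-μ²a/2} da and E[T_{μ,t}] = (1-e^{-μ²t/2})/μ², the variance of T_{μ√r,t} equals -(3t/(2μ²r))e^{-μ²rt/2} + (3/(μ⁴r²))(1-e^{-μ²rt/2}) - (1-e^{-μ²rt/2})²/(μ⁴r²), and lim_{r→∞} r² · Var[T_{μ√r,t}] = 2/μ⁴. -/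
open Real Filter MeasureTheory

lemma aux_integral (c t : ℝ) (hc : c ≠ 0) :
    ∫ a in (0:ℝ)..t, a * Real.exp (-c * a)
      = 1 / c ^ 2 - (t / c + 1 / c ^ 2) * Real.exp (-c * t) := by
  have key : ∀ x : ℝ, HasDerivAt (fun a => -(a / c + 1 / c ^ 2) * Real.exp (-c * a))
      (x * Real.exp (-c * x)) x := by
    intro x
    have h1 : HasDerivAt (fun a : ℝ => -(a / c + 1 / c ^ 2)) (-(1 / c)) x :=
      (((hasDerivAt_id x).div_const c).add_const (1 / c ^ 2)).neg
    have h2 : HasDerivAt (fun a : ℝ => Real.exp (-c * a)) (-c * Real.exp (-c * x)) x := by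
      have := ((hasDerivAt_id x).const_mul (-c)).exp
      simpa [mul_comm] using this
    have : HasDerivAt (fun a => -(a / c + 1 / c ^ 2) * Real.exp (-c * a)) _ x := h1.mul h2
    convert this using 1
    field_simp
    ring
  have := intervalIntegral.integral_eq_sub_of_hasDerivAt (a := (0:ℝ)) (b := t) (f := fun a =>
      -(a / c + 1 / c ^ 2) * Real.exp (-c * a)) (fun x _ => key x) ?_
  · rw [this]
    simp only [mul_zero, neg_zero, Real.exp_zero, mul_one]
    ring
  · apply Continuous.intervalIntegrable
    continuity

theorem stmt_15 (μ t : ℝ) (hμ : μ ≠ 0) (ht : 0 < t)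
    (m1 m2 : ℝ → ℝ)
    (hm1 : ∀ r > 0, m1 r = (1 - Real.exp (-(μ ^ 2) * r * t / 2)) / (μ ^ 2 * r))
    (hm2 : ∀ r > 0, m2 r = (3 / 4) * ∫ a in (0:ℝ)..t, a * Real.exp (-(μ ^ 2) * r * a / 2)) :
    (∀ r > 0,
      m2 r - (m1 r) ^ 2 =
        -(3 * t / (2 * μ ^ 2 * r)) * Real.exp (-(μ ^ 2) * r * t / 2) +
          (3 / (μ ^ 4 * r ^ 2)) * (1 - Real.exp (-(μ ^ 2) * r * t / 2)) -
          (1 - Real.exp (-(μ ^ 2) * r * t / 2)) ^ 2 / (μ ^ 4 * r ^ 2)) ∧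
    Tendsto (fun r => r ^ 2 * (m2 r - (m1 r) ^ 2)) atTop (nhds (2 / μ ^ 4)) := by
  have hμ2 : μ ^ 2 ≠ 0 := pow_ne_zero _ hμ
  have hμ2pos : 0 < μ ^ 2 := by positivity
  have hmain : ∀ r > 0,
      m2 r - (m1 r) ^ 2 =
        -(3 * t / (2 * μ ^ 2 * r)) * Real.exp (-(μ ^ 2) * r * t / 2) +
          (3 / (μ ^ 4 * r ^ 2)) * (1 - Real.exp (-(μ ^ 2) * r * t / 2)) -
          (1 - Real.exp (-(μ ^ 2) * r * t / 2)) ^ 2 / (μ ^ 4 * r ^ 2) := by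
    intro r hr
    have hc : μ ^ 2 * r / 2 ≠ 0 := by positivity
    have hint := aux_integral (μ ^ 2 * r / 2) t hc
    have heq : ∀ a : ℝ, -(μ ^ 2 * r / 2) * a = -(μ ^ 2) * r * a / 2 := by intro a; ring
    rw [hm2 r hr, hm1 r hr]
    have hint' : (∫ a in (0:ℝ)..t, a * Real.exp (-(μ ^ 2) * r * a / 2))
        = 1 / (μ ^ 2 * r / 2) ^ 2 - (t / (μ ^ 2 * r / 2) + 1 / (μ ^ 2 * r / 2) ^ 2)
            * Real.exp (-(μ ^ 2) * r * t / 2) := by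
      rw [← heq t, ← hint]
      congr 1
      funext a
      rw [heq]
    rw [hint']
    have hr' : r ≠ 0 := ne_of_gt hr
    field_simp
    ring
  refine ⟨hmain, ?_⟩
  set k : ℝ := μ ^ 2 * t / 2 with hk
  have hkpos : 0 < k := by positivity
  have hk' : k ≠ 0 := ne_of_gt hkpos
  have harg : ∀ r : ℝ, -(k * r) = -(μ ^ 2) * r * t / 2 := by
    intro r; rw [hk]; ring
  have hkr : Tendsto (fun r : ℝ => k * r) atTop atTop :=
    (tendsto_const_mul_atTop_of_pos hkpos).mpr tendsto_id
  have hE : Tendsto (fun r : ℝ => Real.exp (-(μ ^ 2) * r * t / 2)) atTop (nhds 0) := by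
    have : Tendsto (fun r : ℝ => -(k * r)) atTop atBot := tendsto_neg_atBot_iff.mpr hkr
    have := Real.tendsto_exp_atBot.comp this
    refine this.congr (fun r => ?_)
    simp only [Function.comp_apply]
    rw [harg]
  have hrE : Tendsto (fun r : ℝ => r * Real.exp (-(μ ^ 2) * r * t / 2)) atTop (nhds 0) := by
    have hcomp : Tendsto (fun r : ℝ => (k * r) * Real.exp (-(k * r))) atTop (nhds 0) := by
      have := (tendsto_pow_mul_exp_neg_atTop_nhds_zero 1).comp hkr
      simpa [Function.comp_def] using this
    have := hcomp.const_mul (1 / k)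
    rw [mul_zero] at this
    refine this.congr (fun r => ?_)
    rw [harg]
    field_simp
  have hlim : Tendsto (fun r : ℝ =>
      -(3 * t / (2 * μ ^ 2)) * (r * Real.exp (-(μ ^ 2) * r * t / 2)) +
        (3 / μ ^ 4) * (1 - Real.exp (-(μ ^ 2) * r * t / 2)) -
        (1 - Real.exp (-(μ ^ 2) * r * t / 2)) ^ 2 / μ ^ 4) atTop (nhds (2 / μ ^ 4)) := by
    have h1 := hrE.const_mul (-(3 * t / (2 * μ ^ 2)))
    have h2 := ((tendsto_const_nhds (x := (1:ℝ))).sub hE).const_mul (3 / μ ^ 4)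
    have h3 := (((tendsto_const_nhds (x := (1:ℝ))).sub hE).pow 2).div_const (μ ^ 4)
    have := (h1.add h2).sub h3
    convert this using 2
    field_simp
    ring
  refine hlim.congr' ?_
  filter_upwards [eventually_gt_atTop (0:ℝ)] with r hr
  rw [hmain r hr]
  have hr' : r ≠ 0 := ne_of_gt hr
  field_simp
end
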